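/- arXiv:2409.11970 — 2 statements merged into one kernel-verified Lean document; each statement's English description precedes it below -/
import Mathlib

section
/- Let d ≥ 1 and let Q_d be the graph of the d-dimensional hypercube: its vertices are the 2^d points of {0,1}^d, and two vertices are adjacent if and only if they differ in exactly one coordinate. Then there exists a polynomial H(x) with nonnegative integer coefficients such that (1−x)^{2^d+1} · Ehr(P(Q_d),x) = H(x) as formal power series, and H is palindromic of degree exactly 2^d − 2. -/
open Polynomial PowerSeries Pointwise

/-- The graph polytope `P(G)` of a simple graph `G`:
all points with coordinates in `[0,1]` such that `x i + x j ≤ 1` for every edge `ij`. -/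
def graphPolytope {V : Type*} (G : SimpleGraph V) : Set (V → ℝ) :=
  {x | (∀ i, 0 ≤ x i ∧ x i ≤ 1) ∧ ∀ i j, G.Adj i j → x i + x j ≤ 1}

/-- `ehr P n` is the number of lattice points in the `n`-th dilate `nP` of `P`. -/
noncomputable def ehr {V : Type*} (P : Set (V → ℝ)) (n : ℕ) : ℕ :=
  Set.ncard {m : V → ℤ | (fun i => (m i : ℝ)) ∈ (n : ℝ) • P}

/-- The Ehrhart series `Ehr(P, x) = Σ_{n ≥ 0} ehr(P,n) xⁿ` as a formal power series over `ℚ`. -/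
noncomputable def ehrSeries {V : Type*} (P : Set (V → ℝ)) : PowerSeries ℚ :=
  PowerSeries.mk fun n => (ehr P n : ℚ)

/-- The graph of the `d`-dimensional hypercube: vertices are the `2 ^ d` points of
`{0,1}^d`, and two vertices are adjacent iff they differ in exactly one coordinate. -/
def cubeGraph (d : ℕ) : SimpleGraph (Fin d → Bool) where
  Adj x y := ∃! i, x i ≠ y i
  symm := by
    constructor
    rintro x y ⟨i, hi, hu⟩
    exact ⟨i, hi.symm, fun j hj => hu j hj.symm⟩
  loopless := by
    constructor
    rintro x ⟨i, hi, -⟩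
    exact hi rfl


namespace S10
open Finset Equiv PowerSeries
attribute [local instance] Classical.propDecidable

lemma nat_card_strictMono (a b : ℕ) :
    Nat.card {f : Fin a → Fin b // StrictMono f} = b.choose a := by
  have e : {f : Fin a → Fin b // StrictMono f} ≃ {s : Finset (Fin b) // s.card = a} :=
    { toFun := fun f => ⟨Finset.univ.image f.1, by
        rw [Finset.card_image_of_injective _ f.2.injective, card_univ, Fintype.card_fin]⟩
      invFun := fun s => ⟨Finset.orderEmbOfFin s.1 s.2, (Finset.orderEmbOfFin s.1 s.2).strictMono⟩
      left_inv := fun ⟨f, hf⟩ => Subtype.ext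
        (Finset.orderEmbOfFin_unique _ (fun x => mem_image_of_mem f (mem_univ x)) hf).symm
      right_inv := fun ⟨s, hs⟩ => Subtype.ext (by
        apply Finset.coe_injective
        rw [coe_image, coe_univ, Set.image_univ, Finset.range_orderEmbOfFin]) }
  rw [Nat.card_congr e, Nat.card_eq_fintype_card]
  rw [Fintype.card_finset_len, Fintype.card_fin]

/-- auxiliary counting function: number of "non-strict positions" below `i`. -/
def cnt (s : Finset (Fin m)) (i : Fin (m+1)) : ℕ :=
  #(univ.filter (fun j : Fin m => (j : ℕ) < (i : ℕ) ∧ j ∉ s))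

lemma cnt_succ (s : Finset (Fin m)) (i : Fin m) :
    cnt s i.succ = cnt s i.castSucc + (if i ∈ s then 0 else 1) := by
  unfold cnt
  have : (univ.filter (fun j : Fin m => (j : ℕ) < (i.succ : ℕ) ∧ j ∉ s))
      = (univ.filter (fun j : Fin m => (j : ℕ) < (i.castSucc : ℕ) ∧ j ∉ s)) ∪
        (univ.filter (fun j : Fin m => j = i ∧ j ∉ s)) := by
    ext j
    simp only [mem_filter, mem_union, mem_univ, true_and, Fin.val_succ, Fin.coe_castSucc]
    constructor
    · rintro ⟨hj, hjs⟩
      rcases Nat.lt_succ_iff_lt_or_eq.1 hj with h | h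
      · exact Or.inl ⟨h, hjs⟩
      · exact Or.inr ⟨Fin.ext h, hjs⟩
    · rintro (⟨hj, hjs⟩ | ⟨rfl, hjs⟩)
      · exact ⟨Nat.lt_succ_of_lt hj, hjs⟩
      · exact ⟨Nat.lt_succ_self _, hjs⟩
  rw [this, Finset.card_union_of_disjoint]
  · congr 1
    by_cases hi : i ∈ s
    · rw [if_pos hi, Finset.card_eq_zero]
      ext j
      simp only [mem_filter, mem_univ, true_and, Finset.notMem_empty, iff_false]
      rintro ⟨rfl, h⟩; exact h hi
    · simp only [hi, if_false]
      rw [Finset.card_eq_one]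
      exact ⟨i, by ext j; simp [hi]; rintro rfl; exact hi⟩
  · rw [Finset.disjoint_left]
    intro j hj hj'
    simp only [mem_filter, mem_univ, true_and] at hj hj'
    obtain ⟨rfl, -⟩ := hj'
    have := hj.1
    simp at this
lemma cnt_zero (s : Finset (Fin m)) : cnt s 0 = 0 := by
  unfold cnt
  rw [Finset.card_eq_zero]
  ext j; simp

lemma cnt_last (s : Finset (Fin m)) : cnt s (Fin.last m) = m - s.card := by
  unfold cnt
  have : (univ.filter (fun j : Fin m => (j : ℕ) < (Fin.last m : ℕ) ∧ j ∉ s)) = sᶜ := by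
    ext j; simp [j.isLt]
  rw [this, Finset.card_compl, Fintype.card_fin]

lemma cnt_le (s : Finset (Fin m)) (i : Fin (m+1)) : cnt s i ≤ m - s.card := by
  rw [← cnt_last s]
  apply Finset.card_le_card
  intro j hj
  simp only [cnt, mem_filter] at hj ⊢
  exact ⟨hj.1, by simpa using j.isLt, hj.2.2⟩

lemma card_le (s : Finset (Fin m)) : s.card ≤ m := by
  simpa using Finset.card_le_card (Finset.subset_univ s)


variable {m : ℕ}

section count
variable (n : ℕ) (s : Finset (Fin m))

lemma cnt_le_of_strictMono {M : ℕ} {G : Fin (m+1) → Fin M} (hG : StrictMono G)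
    (i : Fin (m+1)) : cnt s i ≤ (G i : ℕ) := by
  induction i using Fin.induction with
  | zero => simp [cnt_zero]
  | succ i ih =>
    have h1 := cnt_succ s i
    have h2 := hG (Fin.castSucc_lt_succ (i := i))
    by_cases hi : i ∈ s <;> simp [hi] at h1 <;> omega

lemma strictMono_gap {M : ℕ} {G : Fin (m+1) → Fin M} (hG : StrictMono G)
    (i : Fin (m+1)) : (G i : ℕ) + (cnt s (Fin.last m) - cnt s i) ≤ G (Fin.last m) := by
  induction i using Fin.reverseInduction with
  | last => simp
  | cast i ih =>
    have h1 := cnt_succ s i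
    have h2 := hG (Fin.castSucc_lt_succ (i := i))
    have h3 := cnt_le s i.succ
    have h4 := cnt_le s i.castSucc
    have h5 := cnt_le s (Fin.last m)
    have h6 : cnt s i.castSucc ≤ cnt s i.succ := by omega
    -- need : cnt s i.succ ≤ cnt s last
    have h7 : cnt s i.succ ≤ cnt s (Fin.last m) := by
      apply Finset.card_le_card
      intro j hj
      simp only [cnt, mem_filter, mem_univ, true_and] at hj ⊢
      refine ⟨lt_of_lt_of_le hj.1 ?_, hj.2⟩
      have := (i.succ).isLt
      simp only [Fin.val_last]
      omega
    by_cases hi : i ∈ s <;> simp [hi] at h1 <;> omega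

lemma nat_card_monotone_strict :
    Nat.card {g : Fin (m+1) → Fin (n+1) //
        Monotone g ∧ ∀ i ∈ s, g i.castSucc < g i.succ} =
      (n + 1 + (m - s.card)).choose (m+1) := by
  have key : ∀ (G : Fin (m+1) → Fin (n + 1 + (m - s.card))), StrictMono G →
      ∀ i, (G i : ℕ) ≤ n + cnt s i := by
    intro G hG i
    have h1 := strictMono_gap s hG i
    have h2 := cnt_le s i
    have h3 := (G (Fin.last m)).isLt
    have h4 := cnt_last s
    omega
  have e : {g : Fin (m+1) → Fin (n+1) //
        Monotone g ∧ ∀ i ∈ s, g i.castSucc < g i.succ}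
      ≃ {G : Fin (m+1) → Fin (n + 1 + (m - s.card)) // StrictMono G} :=
    { toFun := fun g => ⟨fun i => ⟨(g.1 i : ℕ) + cnt s i, by
        have h1 := (g.1 i).isLt
        have h2 := cnt_le s i
        omega⟩, by
        rw [Fin.strictMono_iff_lt_succ]
        intro i
        have h1 := cnt_succ s i
        have h2 := g.2.1 (Fin.castSucc_lt_succ (i := i)).le
        simp only [Fin.lt_def, Fin.le_def] at h2 ⊢
        by_cases hi : i ∈ s
        · have := g.2.2 i hi
          simp only [Fin.lt_def] at this
          simp [hi] at h1
          omega
        · simp [hi] at h1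
          omega⟩
      invFun := fun G => ⟨fun i => ⟨(G.1 i : ℕ) - cnt s i, by
        have := key G.1 G.2 i
        omega⟩, by
        constructor
        · rw [Fin.monotone_iff_le_succ]
          intro i
          have h1 := cnt_succ s i
          have h2 := G.2 (Fin.castSucc_lt_succ (i := i))
          have h3 := cnt_le_of_strictMono s G.2 i.castSucc
          simp only [Fin.lt_def] at h2
          simp only [Fin.le_def]
          by_cases hi : i ∈ s <;> simp [hi] at h1 <;> omega
        · intro i hi
          have h1 := cnt_succ s i
          have h2 := G.2 (Fin.castSucc_lt_succ (i := i))
          have h3 := cnt_le_of_strictMono s G.2 i.castSucc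
          simp only [Fin.lt_def] at h2 ⊢
          simp [hi] at h1
          omega⟩
      left_inv := fun g => Subtype.ext (funext fun i => Fin.ext (by simp))
      right_inv := fun G => Subtype.ext (funext fun i => Fin.ext (by
        have := cnt_le_of_strictMono s G.2 i
        simp
        omega)) }
  rw [Nat.card_congr e, nat_card_strictMono]

end count
lemma chain_lt {α : Type*} [Preorder α] {g : Fin (m+1) → α} :
    ∀ {j i : Fin (m+1)}, i < j →
    (∀ t : Fin m, i ≤ t.castSucc → t.succ ≤ j → g t.castSucc < g t.succ) →
    g i < g j := by
  intro j
  obtain ⟨j, hj⟩ := j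
  induction j with
  | zero => intro i hij _; exact absurd hij (by simp [Fin.lt_def])
  | succ j ih =>
    intro i hij h
    have hjm : j < m := by omega
    set t : Fin m := ⟨j, hjm⟩ with ht
    have hcs : t.castSucc = ⟨j, by omega⟩ := rfl
    have hsc : t.succ = ⟨j + 1, hj⟩ := rfl
    rcases eq_or_lt_of_le (show i ≤ t.castSucc by
      simp [Fin.le_def, Fin.lt_def] at hij ⊢; omega) with he | hl
    · rw [he]
      exact h t he.le (le_of_eq hsc)
    · have h1 : g i < g (⟨j, by omega⟩ : Fin (m+1)) := by
        apply ih (by omega) (lt_of_lt_of_le hl (le_of_eq hcs))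
        intro u hu1 hu2
        exact h u hu1 (le_trans hu2 (by simp [Fin.le_def]))
      exact lt_trans (by rw [← hcs] at h1; exact h1) (h t (le_of_lt hl) (le_of_eq hsc))

def desSet (w : Perm (Fin (m+1))) : Finset (Fin m) :=
  univ.filter (fun i => w i.succ < w i.castSucc)

def des (w : Perm (Fin (m+1))) : ℕ := (desSet w).card

-- tie-break equivalences
lemma tie_weak {n : ℕ} (w : Perm (Fin (m+1))) (f : Fin (m+1) → Fin (n+1))
    (hf : Monotone (f ∘ w)) :
    (∀ i j, i < j → f (w i) = f (w j) → w i < w j) ↔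
      (∀ i ∈ desSet w, f (w i.castSucc) < f (w i.succ)) := by
  constructor
  · intro h i hi
    simp only [desSet, mem_filter, mem_univ, true_and] at hi
    rcases eq_or_lt_of_le (hf (Fin.castSucc_lt_succ (i := i)).le) with he | hl
    · exact absurd (h _ _ (Fin.castSucc_lt_succ (i := i)) he) (asymm hi)
    · exact hl
  · intro h i j hij hfij
    apply chain_lt (g := fun p => w p) hij
    intro t ht1 ht2
    have e1 : f (w t.castSucc) = f (w t.succ) := by
      apply le_antisymm (hf (Fin.castSucc_lt_succ (i := t)).le)
      have h1 : f (w j) ≤ f (w t.castSucc) := hfij ▸ hf ht1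
      have h2 : f (w t.succ) ≤ f (w j) := hf ht2
      exact le_trans h2 (h1.trans (le_refl _))
    have hts : t ∉ desSet w := by
      intro hts
      exact absurd e1 (h t hts).ne
    simp only [desSet, mem_filter, mem_univ, true_and, not_lt] at hts
    rcases lt_or_eq_of_le hts with h' | h'
    · exact h'
    · exfalso
      have := congrArg Fin.val (w.injective h')
      simp [Fin.val_succ] at this

noncomputable def LEfin (R : Fin (m+1) → Fin (m+1) → Prop) : Finset (Perm (Fin (m+1))) :=
  univ.filter (fun w => ∀ a b, R a b → w.symm a < w.symm b)

/-- reindexing equivalence -/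
lemma card_class (n : ℕ) (w : Perm (Fin (m+1))) :
    #(univ.filter (fun f : Fin (m+1) → Fin (n+1) =>
        Monotone (f ∘ w) ∧ ∀ i ∈ desSet w, f (w i.castSucc) < f (w i.succ))) =
      (n + 1 + (m - des w)).choose (m+1) := by
  simp only [des]
  rw [← Fintype.card_subtype, ← Nat.card_eq_fintype_card, ← nat_card_monotone_strict n (desSet w)]
  apply Nat.card_congr
  exact
    { toFun := fun f => ⟨f.1 ∘ w, f.2.1, fun i hi => f.2.2 i hi⟩
      invFun := fun g => ⟨g.1 ∘ w.symm, by
        have hco : (g.1 ∘ ⇑w.symm) ∘ ⇑w = g.1 := by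
          funext x; simp
        refine ⟨by rw [hco]; exact g.2.1, fun i hi => ?_⟩
        show (g.1 ∘ ⇑w.symm) (w i.castSucc) < (g.1 ∘ ⇑w.symm) (w i.succ)
        simpa using g.2.2 i hi⟩
      left_inv := fun f => Subtype.ext (by funext x; simp)
      right_inv := fun g => Subtype.ext (by funext x; simp) }

lemma weak_count (R : Fin (m+1) → Fin (m+1) → Prop) (hR : ∀ a b, R a b → a < b) (n : ℕ) :
    Nat.card {f : Fin (m+1) → Fin (n+1) // ∀ a b, R a b → f a ≤ f b} =
      ∑ w ∈ LEfin R, (n + 1 + (m - des w)).choose (m+1) := by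
  rw [Nat.card_eq_fintype_card, Fintype.card_subtype]
  rw [Finset.card_eq_sum_card_fiberwise (f := fun f => Tuple.sort f) (t := LEfin R) ?hmem]
  case hmem =>
    intro f hf
    simp only [Finset.mem_coe, LEfin, mem_filter, mem_univ, true_and] at hf ⊢
    intro a b hab
    obtain ⟨hmono, hties⟩ := Tuple.eq_sort_iff.mp (rfl : Tuple.sort f = Tuple.sort f)
    set w := Tuple.sort f with hw
    rcases lt_trichotomy (w.symm a) (w.symm b) with h | h | h
    · exact h
    · exfalso
      have : a = b := by
        have := congrArg w h; simpa using this
      exact absurd (this ▸ hR a b hab) (lt_irrefl _)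
    · exfalso
      have h1 : f b ≤ f a := by
        have := hmono h.le
        simpa using this
      have h2 : f a = f b := le_antisymm (hf a b hab) h1
      have h3 := hties _ _ h (by simpa using h2.symm)
      simp only [Equiv.apply_symm_apply] at h3
      exact absurd (hR a b hab) (asymm h3)
  · apply Finset.sum_congr rfl
    intro w hw
    simp only [LEfin, mem_filter, mem_univ, true_and] at hw
    rw [Finset.filter_filter]
    rw [show (univ.filter fun f : Fin (m+1) → Fin (n+1) =>
        (∀ a b, R a b → f a ≤ f b) ∧ Tuple.sort f = w)
      = (univ.filter (fun f : Fin (m+1) → Fin (n+1) =>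
        Monotone (f ∘ w) ∧ ∀ i ∈ desSet w, f (w i.castSucc) < f (w i.succ))) from ?_,
      card_class n w]
    ext f
    simp only [mem_filter, mem_univ, true_and]
    constructor
    · rintro ⟨hP, rfl⟩
      obtain ⟨hmono, hties⟩ := (Tuple.eq_sort_iff (f := f)).mp rfl
      exact ⟨hmono, (tie_weak _ f hmono).mp hties⟩
    · rintro ⟨hmono, hstrict⟩
      refine ⟨fun a b hab => ?_, (Tuple.eq_sort_iff.mpr
        ⟨hmono, (tie_weak w f hmono).mpr hstrict⟩).symm⟩
      have h1 := hw a b hab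
      have := hmono h1.le
      simpa using this
def ascSet (w : Perm (Fin (m+1))) : Finset (Fin m) :=
  univ.filter (fun i => w i.castSucc < w i.succ)
lemma des_le (w : Perm (Fin (m+1))) : des w ≤ m := card_le _

lemma ascSet_eq_compl (w : Perm (Fin (m+1))) : ascSet w = (desSet w)ᶜ := by
  ext i
  simp only [ascSet, desSet, mem_filter, mem_univ, true_and, Finset.mem_compl, not_lt]
  constructor
  · exact fun h => le_of_lt h
  · intro h
    rcases lt_or_eq_of_le h with h' | h'
    · exact h'
    · exfalso
      have := congrArg Fin.val (w.injective h'.symm)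
      simp [Fin.val_succ] at this

lemma ascSet_card (w : Perm (Fin (m+1))) : (ascSet w).card = m - des w := by
  rw [ascSet_eq_compl, Finset.card_compl, Fintype.card_fin]; rfl

noncomputable def rsort {N : ℕ} {α : Type*} [LinearOrder α] (f : Fin N → α) : Perm (Fin N) :=
  (Tuple.sort (f ∘ Fin.rev)).trans (Fin.revPerm)

lemma eq_rsort_iff {N : ℕ} {α : Type*} [LinearOrder α] {f : Fin N → α} {w : Perm (Fin N)} :
    w = rsort f ↔ Monotone (f ∘ w) ∧ ∀ i j, i < j → f (w i) = f (w j) → w j < w i := by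
  have hrr : (Fin.revPerm : Perm (Fin N)).trans Fin.revPerm = Equiv.refl _ := by
    ext x; simp
  have h1 : w = rsort f ↔ w.trans Fin.revPerm = Tuple.sort (f ∘ Fin.rev) := by
    unfold rsort
    constructor
    · rintro rfl
      rw [Equiv.trans_assoc, hrr, Equiv.trans_refl]
    · intro h
      rw [← h, Equiv.trans_assoc, hrr, Equiv.trans_refl]
  rw [h1, Tuple.eq_sort_iff]
  have hco : (f ∘ Fin.rev) ∘ (w.trans Fin.revPerm) = f ∘ w := by
    funext x
    simp [Fin.rev_rev]
  rw [hco]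
  apply and_congr Iff.rfl
  constructor
  · intro h i j hij hf
    have := h i j hij (by simpa [Fin.rev_rev] using hf)
    simpa [Fin.rev_lt_rev] using this
  · intro h i j hij hf
    have := h i j hij (by simpa [Fin.rev_rev] using hf)
    simpa [Fin.rev_lt_rev] using this

lemma tie_strict {n : ℕ} (w : Perm (Fin (m+1))) (f : Fin (m+1) → Fin (n+1))
    (hf : Monotone (f ∘ w)) :
    (∀ i j, i < j → f (w i) = f (w j) → w j < w i) ↔
      (∀ i ∈ ascSet w, f (w i.castSucc) < f (w i.succ)) := by
  constructor
  · intro h i hi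
    simp only [ascSet, mem_filter, mem_univ, true_and] at hi
    rcases eq_or_lt_of_le (hf (Fin.castSucc_lt_succ (i := i)).le) with he | hl
    · exact absurd (h _ _ (Fin.castSucc_lt_succ (i := i)) he) (asymm hi)
    · exact hl
  · intro h i j hij hfij
    apply chain_lt (α := (Fin (m+1))ᵒᵈ) (g := fun p => OrderDual.toDual (w p)) hij
    intro t ht1 ht2
    have e1 : f (w t.castSucc) = f (w t.succ) := by
      apply le_antisymm (hf (Fin.castSucc_lt_succ (i := t)).le)
      have h1 : f (w j) ≤ f (w t.castSucc) := hfij ▸ hf ht1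
      have h2 : f (w t.succ) ≤ f (w j) := hf ht2
      exact le_trans h2 h1
    have hts : t ∉ ascSet w := by
      intro hts
      exact absurd e1 (h t hts).ne
    simp only [ascSet, mem_filter, mem_univ, true_and, not_lt] at hts
    show w t.succ < w t.castSucc
    rcases lt_or_eq_of_le hts with h' | h'
    · exact h'
    · exfalso
      have := congrArg Fin.val (w.injective h')
      simp [Fin.val_succ] at this

lemma card_class' (n : ℕ) (w : Perm (Fin (m+1))) :
    #(univ.filter (fun f : Fin (m+1) → Fin (n+1) =>
        Monotone (f ∘ w) ∧ ∀ i ∈ ascSet w, f (w i.castSucc) < f (w i.succ))) =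
      (n + 1 + des w).choose (m+1) := by
  have : n + 1 + des w = n + 1 + (m - (ascSet w).card) := by
    rw [ascSet_card]
    have := des_le w
    omega
  rw [this, ← Fintype.card_subtype, ← Nat.card_eq_fintype_card,
    ← nat_card_monotone_strict n (ascSet w)]
  apply Nat.card_congr
  exact
    { toFun := fun f => ⟨f.1 ∘ w, f.2.1, fun i hi => f.2.2 i hi⟩
      invFun := fun g => ⟨g.1 ∘ w.symm, by
        have hco : (g.1 ∘ ⇑w.symm) ∘ ⇑w = g.1 := by
          funext x; simp
        refine ⟨by rw [hco]; exact g.2.1, fun i hi => ?_⟩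
        show (g.1 ∘ ⇑w.symm) (w i.castSucc) < (g.1 ∘ ⇑w.symm) (w i.succ)
        simpa using g.2.2 i hi⟩
      left_inv := fun f => Subtype.ext (by funext x; simp)
      right_inv := fun g => Subtype.ext (by funext x; simp) }

lemma strict_count (R : Fin (m+1) → Fin (m+1) → Prop) (hR : ∀ a b, R a b → a < b) (n : ℕ) :
    Nat.card {f : Fin (m+1) → Fin (n+1) // ∀ a b, R a b → f a < f b} =
      ∑ w ∈ LEfin R, (n + 1 + des w).choose (m+1) := by
  rw [Nat.card_eq_fintype_card, Fintype.card_subtype]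
  rw [Finset.card_eq_sum_card_fiberwise (f := fun f => rsort f) (t := LEfin R) ?hmem]
  case hmem =>
    intro f hf
    simp only [Finset.mem_coe, LEfin, mem_filter, mem_univ, true_and] at hf ⊢
    intro a b hab
    obtain ⟨hmono, -⟩ := eq_rsort_iff.mp (rfl : rsort f = rsort f)
    set w := rsort f with hw
    rcases lt_trichotomy (w.symm a) (w.symm b) with h | h | h
    · exact h
    · exfalso
      have : a = b := by
        have := congrArg w h; simpa using this
      exact absurd (this ▸ hR a b hab) (lt_irrefl _)
    · exfalso
      have h1 : f b ≤ f a := by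
        have := hmono h.le
        simpa using this
      exact absurd (hf a b hab) (not_lt.mpr h1)
  · apply Finset.sum_congr rfl
    intro w hw
    simp only [LEfin, mem_filter, mem_univ, true_and] at hw
    rw [Finset.filter_filter]
    rw [show (univ.filter fun f : Fin (m+1) → Fin (n+1) =>
        (∀ a b, R a b → f a < f b) ∧ rsort f = w)
      = (univ.filter (fun f : Fin (m+1) → Fin (n+1) =>
        Monotone (f ∘ w) ∧ ∀ i ∈ ascSet w, f (w i.castSucc) < f (w i.succ))) from ?_,
      card_class' n w]
    ext f
    simp only [mem_filter, mem_univ, true_and]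
    constructor
    · rintro ⟨hP, rfl⟩
      obtain ⟨hmono, hties⟩ := (eq_rsort_iff (f := f)).mp rfl
      exact ⟨hmono, (tie_strict _ f hmono).mp hties⟩
    · rintro ⟨hmono, hstrict⟩
      have hties := (tie_strict w f hmono).mpr hstrict
      refine ⟨fun a b hab => ?_, (eq_rsort_iff.mpr ⟨hmono, hties⟩).symm⟩
      have h1 := hw a b hab
      rcases eq_or_lt_of_le (by simpa using hmono h1.le : f a ≤ f b) with he | hl
      · exfalso
        have := hties _ _ h1 (by simpa using he)
        simp only [Equiv.apply_symm_apply] at this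
        exact absurd (hR a b hab) (asymm this)
      · exact hl
def par {d : ℕ} (v : Fin d → Bool) : ZMod 2 := ∑ i, if v i then 1 else 0
noncomputable def par2 {d : ℕ} (v : Fin d → Bool) : Bool := decide (par v = 1)

lemma par_adj {d : ℕ} {x y : Fin d → Bool} (h : (cubeGraph d).Adj x y) : par x ≠ par y := by
  obtain ⟨i0, hi0, hu⟩ := h
  intro he
  have key : par x - par y
      = ∑ i, ((if x i then (1:ZMod 2) else 0) - (if y i then 1 else 0)) := by
    unfold par
    rw [Finset.sum_sub_distrib]
  rw [Finset.sum_eq_single i0] at key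
  · rw [he, sub_self] at key
    revert key
    cases hx : x i0 <;> cases hy : y i0 <;>
      simp [hx, hy] at hi0 ⊢ <;> decide
  · intro j _ hj
    have : x j = y j := by
      by_contra hxy
      exact hj (hu j hxy)
    rw [this, sub_self]
  · intro hj
    exact absurd (Finset.mem_univ i0) hj

lemma zmod2_ext : ∀ a b : ZMod 2, decide (a = 1) = decide (b = 1) → a = b := by decide

lemma par2_adj {d : ℕ} {x y : Fin d → Bool} (h : (cubeGraph d).Adj x y) : par2 x ≠ par2 y :=
  fun he => par_adj h (zmod2_ext _ _ he)

lemma par2_flip {d : ℕ} {a b : Fin d → Bool} (h : (cubeGraph d).Adj a b) :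
    par2 b = !par2 a := by
  have hne := par2_adj h
  revert hne
  cases hpa : par2 a <;> cases hpb : par2 b <;> simp

lemma exists_adj {d : ℕ} (hd : 1 ≤ d) (v : Fin d → Bool) : ∃ u, (cubeGraph d).Adj v u := by
  have i0 : Fin d := ⟨0, hd⟩
  refine ⟨Function.update v i0 (!(v i0)), i0, ?_, ?_⟩
  · simp
  · intro j hj
    by_contra hji
    rw [Function.update_of_ne hji] at hj
    exact hj rfl

lemma zero_mem_polytope (d : ℕ) : (fun _ => (0:ℝ)) ∈ graphPolytope (cubeGraph d) :=
  ⟨fun _ => ⟨le_refl _, zero_le_one⟩, fun _ _ _ => by norm_num⟩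

lemma mem_dilate_iff {d : ℕ} (n : ℕ) (q : (Fin d → Bool) → ℤ) :
    ((fun i => (q i : ℝ)) ∈ (n : ℝ) • graphPolytope (cubeGraph d)) ↔
      ((∀ v, 0 ≤ q v ∧ q v ≤ n) ∧
        ∀ a b, (cubeGraph d).Adj a b → q a + q b ≤ n) := by
  rcases Nat.eq_zero_or_pos n with rfl | hn
  · simp only [Nat.cast_zero]
    constructor
    · rintro ⟨y, hy, hxy⟩
      have hq : ∀ v, q v = 0 := by
        intro v
        have := congrFun hxy v
        simp at this
        exact_mod_cast this.symm
      refine ⟨fun v => by simp [hq v], fun a b _ => by simp [hq a, hq b]⟩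
    · rintro ⟨h1, -⟩
      refine ⟨fun _ => 0, zero_mem_polytope d, ?_⟩
      funext v
      have ha := (h1 v).1
      have hb := (h1 v).2
      have : q v = 0 := le_antisymm hb ha
      simp [this]
  · have hne : (n : ℝ) ≠ 0 := by positivity
    have hnpos : (0:ℝ) < n := by positivity
    rw [Set.mem_smul_set_iff_inv_smul_mem₀ hne]
    show ((_ ∧ _)) ↔ _
    simp only [graphPolytope, Set.mem_setOf_eq, Pi.smul_apply, smul_eq_mul]
    constructor
    · rintro ⟨h1, h2⟩
      refine ⟨fun v => ?_, fun a b hab => ?_⟩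
      · obtain ⟨h3, h4⟩ := h1 v
        rw [le_inv_mul_iff₀ hnpos, mul_zero] at h3
        rw [inv_mul_le_one₀ hnpos] at h4
        exact ⟨by exact_mod_cast h3, by exact_mod_cast h4⟩
      · have h5 := h2 a b hab
        rw [← mul_add, inv_mul_le_one₀ hnpos] at h5
        exact_mod_cast h5
    · rintro ⟨h1, h2⟩
      refine ⟨fun v => ?_, fun a b hab => ?_⟩
      · obtain ⟨h3, h4⟩ := h1 v
        constructor
        · rw [le_inv_mul_iff₀ hnpos, mul_zero]
          exact_mod_cast h3
        · rw [inv_mul_le_one₀ hnpos]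
          exact_mod_cast h4
      · rw [← mul_add, inv_mul_le_one₀ hnpos]
        exact_mod_cast h2 a b hab

/-- Weak order-preserving maps count. -/
noncomputable def Wk (d n : ℕ) : ℕ :=
  Nat.card {f : (Fin d → Bool) → Fin (n+1) //
    ∀ a b, (cubeGraph d).Adj a b → par2 a = false → f a ≤ f b}

/-- Strict order-preserving maps count. -/
noncomputable def St (d n : ℕ) : ℕ :=
  Nat.card {f : (Fin d → Bool) → Fin (n+1) //
    ∀ a b, (cubeGraph d).Adj a b → par2 a = false → f a < f b}

lemma ehr_eq_Wk (d n : ℕ) : ehr (graphPolytope (cubeGraph d)) n = Wk d n := by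
  unfold ehr Wk
  rw [← Nat.card_coe_set_eq]
  apply Nat.card_congr
  refine Equiv.trans (Equiv.subtypeEquivRight (fun q => mem_dilate_iff n q)) ?_
  exact
    { toFun := fun q => ⟨fun v => if par2 v then
        ⟨n - (q.1 v).toNat, by omega⟩ else
        ⟨(q.1 v).toNat, by
          have h1 := (q.2.1 v).1
          have h2 := (q.2.1 v).2
          omega⟩, by
        intro a b hab hpa
        have hpb : par2 b = true := by rw [par2_flip hab, hpa]; rfl
        have h1 := (q.2.1 a).1
        have h2 := (q.2.1 b).1
        have h3 := q.2.2 a b hab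
        simp only [Fin.le_def, hpa, hpb, if_true, Bool.false_eq_true, if_false]
        show ((q.1 a).toNat : ℕ) ≤ n - (q.1 b).toNat
        omega⟩
      invFun := fun f => ⟨fun v => if par2 v then ((n : ℤ) - ((f.1 v : ℕ) : ℤ))
          else ((f.1 v : ℕ) : ℤ), by
        refine ⟨fun v => ?_, fun a b hab => ?_⟩
        · have := (f.1 v).isLt
          by_cases hv : par2 v <;> simp only [hv, if_true, Bool.false_eq_true, if_false] <;> omega
        · have h1 := (f.1 a).isLt
          have h2 := (f.1 b).isLt
          cases hpa : par2 a
          · have hpb : par2 b = true := by rw [par2_flip hab, hpa]; rfl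
            have h3 : f.1 a ≤ f.1 b := f.2 a b hab hpa
            have h4 : ((f.1 a : ℕ) : ℤ) ≤ ((f.1 b : ℕ) : ℤ) := by exact_mod_cast h3
            simp only [hpa, hpb, if_true, Bool.false_eq_true, if_false]
            omega
          · have hpb : par2 b = false := by rw [par2_flip hab, hpa]; rfl
            have h3 : f.1 b ≤ f.1 a := f.2 b a hab.symm hpb
            have h4 : ((f.1 b : ℕ) : ℤ) ≤ ((f.1 a : ℕ) : ℤ) := by exact_mod_cast h3
            simp only [hpa, hpb, if_true, Bool.false_eq_true, if_false]
            omega⟩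
      left_inv := fun q => Subtype.ext (by
        funext v
        have h1 := (q.2.1 v).1
        have h2 := (q.2.1 v).2
        by_cases hv : par2 v <;> simp [hv] <;> omega)
      right_inv := fun f => Subtype.ext (by
        funext v
        have h1 := (f.1 v).isLt
        by_cases hv : par2 v <;> simp [hv] <;> (apply Fin.ext; simp; omega)) }

lemma fv_le {d n : ℕ} (hd : 1 ≤ d)
    (f : {f : (Fin d → Bool) → Fin (n+1) //
      ∀ a b, (cubeGraph d).Adj a b → par2 a = false → f a < f b})
    {v : Fin d → Bool} (hv : par2 v = false) : (f.1 v : ℕ) + 1 ≤ n := by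
  obtain ⟨u, hu⟩ := exists_adj hd v
  have hpu : par2 u = true := by rw [par2_flip hu, hv]; rfl
  have h1 := f.2 v u hu hv
  have h2 := (f.1 u).isLt
  simp only [Fin.lt_def] at h1
  omega

lemma fv_ge {d n : ℕ} (hd : 1 ≤ d)
    (f : {f : (Fin d → Bool) → Fin (n+1) //
      ∀ a b, (cubeGraph d).Adj a b → par2 a = false → f a < f b})
    {v : Fin d → Bool} (hv : par2 v = true) : 1 ≤ (f.1 v : ℕ) := by
  obtain ⟨u, hu⟩ := exists_adj hd v
  have hpu : par2 u = false := by rw [par2_flip hu, hv]; rfl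
  have h1 := f.2 u v hu.symm hpu
  simp only [Fin.lt_def] at h1
  omega

lemma St_succ_eq_Wk (d : ℕ) (hd : 1 ≤ d) (n : ℕ) : St d (n+1) = Wk d n := by
  unfold St Wk
  apply Nat.card_congr
  exact
    { toFun := fun f => ⟨fun v => if hpv : par2 v = true then
        ⟨(f.1 v : ℕ) - 1, by have := (f.1 v).isLt; omega⟩ else
        ⟨(f.1 v : ℕ), by
          have := fv_le hd f (Bool.not_eq_true _ |>.mp hpv)
          omega⟩, by
        intro a b hab hpa
        have hpb : par2 b = true := by rw [par2_flip hab, hpa]; rfl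
        have h1 := f.2 a b hab hpa
        have h2 := fv_ge hd f hpb
        simp only [Fin.lt_def] at h1
        simp only [Fin.le_def, dif_pos hpb, dif_neg (by simp [hpa] : ¬ par2 a = true)]
        omega⟩
      invFun := fun g => ⟨fun v => if hpv : par2 v = true then
        ⟨(g.1 v : ℕ) + 1, by have := (g.1 v).isLt; omega⟩ else
        ⟨(g.1 v : ℕ), by have := (g.1 v).isLt; omega⟩, by
        intro a b hab hpa
        have hpb : par2 b = true := by rw [par2_flip hab, hpa]; rfl
        have h1 := g.2 a b hab hpa
        simp only [Fin.le_def] at h1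
        simp only [Fin.lt_def, dif_pos hpb, dif_neg (by simp [hpa] : ¬ par2 a = true)]
        omega⟩
      left_inv := fun f => Subtype.ext (by
        funext v
        by_cases hv : par2 v = true
        · have h1 := fv_ge hd f hv
          simp only [dif_pos hv]
          apply Fin.ext
          show (f.1 v : ℕ) - 1 + 1 = (f.1 v : ℕ)
          omega
        · simp only [dif_neg hv])
      right_inv := fun g => Subtype.ext (by
        funext v
        by_cases hv : par2 v = true
        · simp only [dif_pos hv]
          apply Fin.ext
          show (g.1 v : ℕ) + 1 - 1 = (g.1 v : ℕ)
          omega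
        · simp only [dif_neg hv]) }

lemma St_zero (d : ℕ) (hd : 1 ≤ d) : St d 0 = 0 := by
  unfold St
  have : IsEmpty {f : (Fin d → Bool) → Fin 1 //
      ∀ a b, (cubeGraph d).Adj a b → par2 a = false → f a < f b} := by
    refine ⟨fun f => ?_⟩
    obtain ⟨u, hu⟩ := exists_adj hd (fun _ => false)
    cases hpv : par2 (fun _ => false)
    · have h1 := f.2 _ u hu hpv
      simp only [Fin.lt_def] at h1
      have := (f.1 u).isLt
      have := (f.1 (fun _ => false)).isLt
      omega
    · have hpu : par2 u = false := by rw [par2_flip hu, hpv]; rfl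
      have h1 := f.2 u _ hu.symm hpu
      simp only [Fin.lt_def] at h1
      have := (f.1 u).isLt
      have := (f.1 (fun _ => false)).isLt
      omega
  exact Nat.card_of_isEmpty

lemma series_D (m D : ℕ) (hD : D ≤ m) :
    (PowerSeries.mk fun n => ((n + 1 + (m - D)).choose (m+1) : ℚ)) =
      (X : PowerSeries ℚ)^D * (invOneSubPow ℚ (m+2)).val := by
  ext n
  rw [PowerSeries.coeff_mk, PowerSeries.coeff_X_pow_mul' _ D n, invOneSubPow_val_succ_eq_mk_add_choose]
  split_ifs with h
  · rw [PowerSeries.coeff_mk]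
    congr 2
    omega
  · rw [Nat.choose_eq_zero_of_lt (by omega)]
    simp

lemma mk_sum_choose (m : ℕ) (W : Finset (Perm (Fin (m+1)))) (g : Perm (Fin (m+1)) → ℕ)
    (hg : ∀ w, g w ≤ m) :
    (PowerSeries.mk fun n => ((∑ w ∈ W, (n + 1 + (m - g w)).choose (m+1) : ℕ) : ℚ)) =
      (∑ w ∈ W, (X : PowerSeries ℚ)^(g w)) * (invOneSubPow ℚ (m+2)).val := by
  rw [Finset.sum_mul]
  ext n
  rw [PowerSeries.coeff_mk, map_sum]
  push_cast
  apply Finset.sum_congr rfl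
  intro w hw
  rw [← series_D m (g w) (hg w), PowerSeries.coeff_mk]

lemma coeff_sum_X_pow (m i : ℕ) (W : Finset (Perm (Fin (m+1)))) (g : Perm (Fin (m+1)) → ℕ) :
    (PowerSeries.coeff i) (∑ w ∈ W, (X : PowerSeries ℚ)^(g w)) =
      ((W.filter (fun w => g w = i)).card : ℚ) := by
  rw [map_sum]
  rw [Finset.sum_congr rfl (fun w _ => by
    rw [PowerSeries.coeff_X_pow]
    simp only [eq_comm] : ∀ w ∈ W, (PowerSeries.coeff i) ((X : PowerSeries ℚ)^(g w))
      = if g w = i then (1:ℚ) else 0)]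
  rw [Finset.sum_boole]

lemma perm_monotone_eq_refl {k : ℕ} (w : Perm (Fin k)) (hw : Monotone ⇑w) :
    w = Equiv.refl (Fin k) := by
  have hsm : StrictMono ⇑w := hw.strictMono_of_injective w.injective
  have hss : StrictMono ⇑w.symm := by
    intro a b hab
    by_contra hcon
    rcases eq_or_lt_of_le (not_lt.mp hcon) with he | hl
    · exact absurd (by rw [← Equiv.apply_symm_apply w a, ← Equiv.apply_symm_apply w b, he])
        hab.ne
    · have := hsm hl
      simp only [Equiv.apply_symm_apply] at this
      exact absurd (lt_trans hab this) (lt_irrefl _)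
  haveI : WellFoundedLT (Fin k) := Finite.to_wellFoundedLT
  apply Equiv.ext
  intro j
  have h1 : j ≤ w j := hsm.le_apply
  have h2 : w j ≤ j := by
    have := hss.le_apply (x := w j)
    simpa using this
  exact le_antisymm h2 h1

end S10

open Finset Equiv S10

theorem stmt10 (d : ℕ) (hd : 1 ≤ d) :
    ∃ H : Polynomial ℕ,
      ((1 - PowerSeries.X) ^ (2 ^ d + 1) : PowerSeries ℚ) *
          ehrSeries (graphPolytope (cubeGraph d)) =
          ((H.map (Nat.castRingHom ℚ) : Polynomial ℚ) : PowerSeries ℚ) ∧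
        H.natDegree = 2 ^ d - 2 ∧
        ∀ i ≤ 2 ^ d - 2, H.coeff i = H.coeff (2 ^ d - 2 - i) := by
  classical
  have h2 : 2 ≤ 2^d := by
    calc 2 = 2^1 := (pow_one 2).symm
    _ ≤ 2^d := Nat.pow_le_pow_right (by norm_num) hd
  obtain ⟨m, hm⟩ : ∃ m, 2^d = m + 1 := ⟨2^d - 1, by omega⟩
  have hm1 : 1 ≤ m := by omega
  let q : Fin (m+1) ≃ (Fin d → Bool) :=
    (finCongr hm.symm).trans (Fintype.equivFinOfCardEq (by simp)).symm
  let σ : Equiv.Perm (Fin (m+1)) := Tuple.sort (fun i => par2 (q i))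
  let e : Fin (m+1) ≃ (Fin d → Bool) := σ.trans q
  have hmono : Monotone ((fun i => par2 (q i)) ∘ σ) := Tuple.monotone_sort _
  have horder : ∀ a b : Fin (m+1), par2 (e a) = false → par2 (e b) = true → a < b := by
    intro a b hpa hpb
    rcases lt_trichotomy a b with h | h | h
    · exact h
    · exfalso
      rw [h, hpb] at hpa
      cases hpa
    · exfalso
      have := hmono h.le
      simp only [Function.comp_apply] at this
      have hea : par2 (e a) = par2 (q (σ a)) := rfl
      have heb : par2 (e b) = par2 (q (σ b)) := rfl
      rw [← hea, ← heb, hpa, hpb] at this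
      exact absurd this (by decide)
  set R : Fin (m+1) → Fin (m+1) → Prop :=
    fun a b => (cubeGraph d).Adj (e a) (e b) ∧ par2 (e a) = false with hRdef
  have hR : ∀ a b, R a b → a < b := by
    rintro a b ⟨hadj, hpa⟩
    have hpb : par2 (e b) = true := by rw [par2_flip hadj, hpa]; rfl
    exact horder _ _ hpa hpb
  have hWk : ∀ n, Wk d n =
      Nat.card {F : Fin (m+1) → Fin (n+1) // ∀ a b, R a b → F a ≤ F b} := by
    intro n
    apply Nat.card_congr
    exact
      { toFun := fun f => ⟨fun a => f.1 (e a), fun a b hab => f.2 (e a) (e b) hab.1 hab.2⟩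
        invFun := fun F => ⟨fun v => F.1 (e.symm v), by
          intro a b hadj hpa
          have hr : R (e.symm a) (e.symm b) := by
            rw [hRdef]
            refine ⟨?_, ?_⟩ <;> simp [hadj, hpa]
          exact F.2 _ _ hr⟩
        left_inv := fun f => Subtype.ext (funext fun v => by simp)
        right_inv := fun F => Subtype.ext (funext fun a => by simp) }
  have hSt : ∀ n, St d n =
      Nat.card {F : Fin (m+1) → Fin (n+1) // ∀ a b, R a b → F a < F b} := by
    intro n
    apply Nat.card_congr
    exact
      { toFun := fun f => ⟨fun a => f.1 (e a), fun a b hab => f.2 (e a) (e b) hab.1 hab.2⟩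
        invFun := fun F => ⟨fun v => F.1 (e.symm v), by
          intro a b hadj hpa
          have hr : R (e.symm a) (e.symm b) := by
            rw [hRdef]
            refine ⟨?_, ?_⟩ <;> simp [hadj, hpa]
          exact F.2 _ _ hr⟩
        left_inv := fun f => Subtype.ext (funext fun v => by simp)
        right_inv := fun F => Subtype.ext (funext fun a => by simp) }
  have hehr : ehrSeries (graphPolytope (cubeGraph d)) =
      PowerSeries.mk fun n => (Wk d n : ℚ) := by
    unfold ehrSeries
    ext n
    rw [PowerSeries.coeff_mk, PowerSeries.coeff_mk, ehr_eq_Wk]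
  set U := PowerSeries.invOneSubPow ℚ (m+2) with hU
  set Q : PowerSeries ℚ := ∑ w ∈ LEfin R, (PowerSeries.X : PowerSeries ℚ)^(des w) with hQ
  set P : PowerSeries ℚ := ∑ w ∈ LEfin R, (PowerSeries.X : PowerSeries ℚ)^(m - des w) with hP
  have hQU : (PowerSeries.mk fun n => (Wk d n : ℚ)) = Q * U.val := by
    rw [hQ, hU, ← mk_sum_choose m (LEfin R) des (fun w => des_le w)]
    ext n
    rw [PowerSeries.coeff_mk, PowerSeries.coeff_mk]
    have hn : Wk d n = ∑ w ∈ LEfin R, (n + 1 + (m - des w)).choose (m+1) := by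
      rw [hWk n, weak_count R hR n]
    rw [hn]
  have hPU : (PowerSeries.mk fun n => (St d n : ℚ)) = P * U.val := by
    rw [hP, hU, ← mk_sum_choose m (LEfin R) (fun w => m - des w) (fun w => Nat.sub_le _ _)]
    ext n
    rw [PowerSeries.coeff_mk, PowerSeries.coeff_mk]
    have hn : St d n = ∑ w ∈ LEfin R, (n + 1 + (m - (m - des w))).choose (m+1) := by
      rw [hSt n, strict_count R hR n]
      apply Finset.sum_congr rfl
      intro w hw
      congr 2
      have := des_le w
      omega
    rw [hn]
  have hshift : (PowerSeries.mk fun n => (St d n : ℚ)) =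
      PowerSeries.X * (PowerSeries.mk fun n => (Wk d n : ℚ)) := by
    ext n
    cases n with
    | zero =>
      rw [PowerSeries.coeff_zero_X_mul, PowerSeries.coeff_mk, St_zero d hd]
      simp
    | succ n =>
      rw [PowerSeries.coeff_succ_X_mul, PowerSeries.coeff_mk, PowerSeries.coeff_mk,
        St_succ_eq_Wk d hd n]
  have hPQ : P = PowerSeries.X * Q := by
    have h1 : P * U.val = (PowerSeries.X * Q) * U.val := by
      rw [← hPU, hshift, hQU]
      ring
    have h2 := congrArg (fun z => z * U.inv) h1
    simpa [mul_assoc, Units.val_inv] using h2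
  set N : ℕ → ℕ := fun i => ((LEfin R).filter (fun w => des w = i)).card with hN
  have hNQ : ∀ i, (PowerSeries.coeff i) Q = (N i : ℚ) := fun i => by
    rw [hQ, coeff_sum_X_pow m i _ des]
  have hNP : ∀ i, (PowerSeries.coeff i) P =
      (((LEfin R).filter (fun w => m - des w = i)).card : ℚ) := fun i => by
    rw [hP, coeff_sum_X_pow m i _ (fun w => m - des w)]
  have key : ∀ i, ((LEfin R).filter (fun w => m - des w = i)).card
      = if i = 0 then 0 else N (i-1) := by
    intro i
    have h1 := congrArg (PowerSeries.coeff i) hPQ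
    rw [hNP i] at h1
    cases i with
    | zero =>
      rw [PowerSeries.coeff_zero_X_mul] at h1
      rw [if_pos rfl]
      exact_mod_cast h1
    | succ i =>
      rw [PowerSeries.coeff_succ_X_mul, hNQ i] at h1
      rw [if_neg (Nat.succ_ne_zero i)]
      exact_mod_cast h1
  have hNm : N m = 0 := by
    have hk := key 0
    rw [if_pos rfl] at hk
    have hsub : ((LEfin R).filter (fun w => des w = m)).card
        ≤ ((LEfin R).filter (fun w => m - des w = 0)).card := by
      apply Finset.card_le_card
      intro w hw
      simp only [mem_filter] at hw ⊢
      exact ⟨hw.1, by omega⟩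
    rw [hk] at hsub
    show ((LEfin R).filter (fun w => des w = m)).card = 0
    omega
  have hNbig : ∀ i, m < i → N i = 0 := by
    intro i hi
    show ((LEfin R).filter (fun w => des w = i)).card = 0
    rw [Finset.card_eq_zero, Finset.filter_eq_empty_iff]
    intro w hw
    have := des_le w
    omega
  have hpal : ∀ i ≤ m - 1, N i = N (m - 1 - i) := by
    intro i hi
    have h1 := key (m - i)
    rw [if_neg (by omega)] at h1
    have h2 : ((LEfin R).filter (fun w => m - des w = m - i)).card = N i := by
      show _ = ((LEfin R).filter (fun w => des w = i)).card
      congr 1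
      apply Finset.filter_congr
      intro w hw
      have := des_le w
      constructor
      · intro h; omega
      · intro h; omega
    rw [h2] at h1
    rw [h1]
    congr 1
    omega
  have hN0 : N 0 = 1 := by
    show ((LEfin R).filter (fun w => des w = 0)).card = 1
    rw [Finset.card_eq_one]
    refine ⟨Equiv.refl _, ?_⟩
    ext w
    simp only [mem_filter, Finset.mem_singleton, LEfin, mem_univ, true_and]
    constructor
    · rintro ⟨hle, hdes⟩
      apply perm_monotone_eq_refl
      rw [Fin.monotone_iff_le_succ]
      intro i
      by_contra hcon
      have hmem : i ∈ desSet w := by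
        simp only [desSet, mem_filter, mem_univ, true_and]
        exact not_le.mp hcon
      rw [des, Finset.card_eq_zero] at hdes
      rw [hdes] at hmem
      exact absurd hmem (Finset.notMem_empty i)
    · rintro rfl
      constructor
      · intro a b hab
        exact hR a b hab
      · rw [des, Finset.card_eq_zero]
        ext i
        simp only [desSet, mem_filter, mem_univ, true_and, Equiv.refl_apply,
          Finset.notMem_empty, iff_false, not_lt]
        exact fun h => absurd (Finset.mem_filter.mp h).2 (not_lt.mpr (Fin.castSucc_lt_succ (i := i)).le)
  set Hp : Polynomial ℕ := ∑ w ∈ LEfin R, Polynomial.X ^ (des w) with hHp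
  have hHcoeff : ∀ i, Hp.coeff i = N i := by
    intro i
    rw [hHp, Polynomial.finset_sum_coeff,
      Finset.sum_congr rfl (fun w _ => Polynomial.coeff_X_pow (des w) i),
      Finset.sum_boole, Nat.cast_id]
    show _ = ((LEfin R).filter (fun w => des w = i)).card
    congr 1
    apply Finset.filter_congr
    intro w hw
    exact eq_comm
  refine ⟨Hp, ?_, ?_, ?_⟩
  · rw [hehr, hQU, hm]
    have hunit : ((1 - PowerSeries.X : PowerSeries ℚ))^(m+1+1) = U.inv :=
      (PowerSeries.invOneSubPow_inv_eq_one_sub_pow ℚ (m+2)).symm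
    calc (1 - PowerSeries.X : PowerSeries ℚ)^(m+1+1) * (Q * U.val)
        = Q * ((1 - PowerSeries.X : PowerSeries ℚ)^(m+1+1) * U.val) := by ring
      _ = Q * (U.inv * U.val) := by rw [hunit]
      _ = Q := by rw [Units.inv_val, mul_one]
      _ = ((Hp.map (Nat.castRingHom ℚ) : Polynomial ℚ) : PowerSeries ℚ) := by
          ext i
          rw [hNQ i, Polynomial.coeff_coe, Polynomial.coeff_map, hHcoeff i]
          simp
  · have hle : Hp.natDegree ≤ m - 1 := by
      rw [Polynomial.natDegree_le_iff_coeff_eq_zero]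
      intro i hi
      rw [hHcoeff i]
      rcases eq_or_lt_of_le (show m ≤ i by omega) with rfl | h
      · exact hNm
      · exact hNbig i h
    have hge : m - 1 ≤ Hp.natDegree := by
      apply Polynomial.le_natDegree_of_ne_zero
      rw [hHcoeff (m-1)]
      have := hpal 0 (by omega)
      simp only [Nat.sub_zero] at this
      rw [← this, hN0]
      norm_num
    rw [show 2^d - 2 = m - 1 by omega]
    exact le_antisymm hle hge
  · intro i hi
    rw [hHcoeff, hHcoeff, show 2^d - 2 - i = m - 1 - i by omega]
    exact hpal i (by omega)
end

section
/- Let ℓ ≥ 2 and let C_{2ℓ} be the circular graph on vertex set {1,2,…,2ℓ} with edges {i,i+1} for 1 ≤ i ≤ 2ℓ, indices taken modulo 2ℓ (so {2ℓ,1} is an edge). Then there exists a polynomial H(x) with rational coefficients such that (1−x)^{2ℓ+1} · Ehr(P(C_{2ℓ}),x) = H(x) as formal power series, and H is palindromic of degree exactly 2ℓ−2. -/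
open Polynomial PowerSeries Pointwise


/-- The circular graph on `ZMod n = {1, 2, …, n}`, with `i` adjacent to `i + 1`
(indices modulo `n`). -/
def circularGraph (n : ℕ) : SimpleGraph (ZMod n) where
  Adj x y := x ≠ y ∧ (y = x + 1 ∨ x = y + 1)
  symm := ⟨fun _ _ h => ⟨h.1.symm, h.2.symm⟩⟩
  loopless := ⟨fun _ h => h.1 rfl⟩

namespace Stmt11
open Finset
open scoped Classical

section Seq
variable {D : ℕ} [NeZero D]

lemma val_succ (k : Fin D) (h : k.1 + 1 < D) : ((k + 1 : Fin D) : ℕ) = k.1 + 1 := by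
  have h1 : ((1 : Fin D) : ℕ) = 1 := by
    rw [Fin.val_one']
    exact Nat.mod_eq_of_lt (by omega)
  rw [Fin.val_add, h1, Nat.mod_eq_of_lt h]

lemma lt_succ (k : Fin D) (h : k.1 + 1 < D) : k < k + 1 := by
  have := val_succ k h
  rw [Fin.lt_def, this]
  omega

lemma rel_of_adj {α : Type*} (r : α → α → Prop) (htr : Transitive r) (f : Fin D → α)
    (h : ∀ k : Fin D, k.1 + 1 < D → r (f k) (f (k + 1))) :
    ∀ a b : Fin D, a < b → r (f a) (f b) := by
  have key : ∀ d : ℕ, ∀ a b : Fin D, b.1 = a.1 + d + 1 → r (f a) (f b) := by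
    intro d
    induction d with
    | zero =>
      intro a b hb
      have hk : a.1 + 1 < D := by have := b.2; omega
      have hb' : b = a + 1 := Fin.ext (by rw [val_succ a hk]; omega)
      rw [hb']; exact h a hk
    | succ d ih =>
      intro a b hb
      have hm : a.1 + d + 1 < D := by have := b.2; omega
      set m : Fin D := ⟨a.1 + d + 1, hm⟩ with hmdef
      have h1 : r (f a) (f m) := ih a m rfl
      have hk : m.1 + 1 < D := by have := b.2; simp [hmdef]; omega
      have hb' : b = m + 1 := Fin.ext (by rw [val_succ m hk]; simp [hmdef]; omega)
      rw [hb']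
      exact htr h1 (h m hk)
  intro a b hab
  exact key (b.1 - a.1 - 1) a b (by rw [Fin.lt_def] at hab; omega)

lemma strictMono_of_adj {α : Type*} [Preorder α] (f : Fin D → α)
    (h : ∀ k : Fin D, k.1 + 1 < D → f k < f (k + 1)) : StrictMono f :=
  fun a b hab => rel_of_adj (· < ·) (fun _ _ _ h1 h2 => lt_trans h1 h2) f h a b hab

lemma add_le_of_adj (c : ℤ) (f : Fin D → ℤ)
    (h : ∀ k : Fin D, k.1 + 1 < D → f k + c ≤ f (k + 1)) :
    ∀ a b : Fin D, a ≤ b → f a + ((b.1 - a.1 : ℕ) : ℤ) * c ≤ f b := by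
  have key : ∀ d : ℕ, ∀ a b : Fin D, b.1 = a.1 + d → f a + (d : ℤ) * c ≤ f b := by
    intro d
    induction d with
    | zero =>
      intro a b hb
      have : a = b := Fin.ext (by omega)
      simp [this]
    | succ d ih =>
      intro a b hb
      have hm : a.1 + d < D := by have := b.2; omega
      set m : Fin D := ⟨a.1 + d, hm⟩ with hmdef
      have h1 : f a + (d : ℤ) * c ≤ f m := ih a m rfl
      have hk : m.1 + 1 < D := by have := b.2; simp [hmdef]; omega
      have h2 : f m + c ≤ f (m + 1) := h m hk
      have hb' : b = m + 1 := Fin.ext (by rw [val_succ m hk]; simp [hmdef]; omega)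
      rw [hb']
      push_cast
      linarith
  intro a b hab
  exact key (b.1 - a.1) a b (by rw [Fin.le_def] at hab; omega)

def stepOK (S : Finset (Fin D)) (t : Fin D → ℤ) : Prop :=
  ∀ k : Fin D, k.1 + 1 < D → (t k ≤ t (k + 1) ∧ (k ∈ S → t k < t (k + 1)))

noncomputable def TSet (M : ℕ) (S : Finset (Fin D)) : Finset (Fin D → ℤ) :=
  (Finset.Icc 0 (fun _ => (M : ℤ))).filter (stepOK S)

lemma mem_TSet {M : ℕ} {S : Finset (Fin D)} {t : Fin D → ℤ} :
    t ∈ TSet M S ↔ (∀ k, 0 ≤ t k ∧ t k ≤ (M : ℤ)) ∧ stepOK S t := by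
  simp only [TSet, Finset.mem_filter, Finset.mem_Icc, Pi.le_def]
  constructor
  · rintro ⟨⟨h1, h2⟩, h3⟩
    exact ⟨fun k => ⟨h1 k, h2 k⟩, h3⟩
  · rintro ⟨h1, h2⟩
    exact ⟨⟨fun k => (h1 k).1, fun k => (h1 k).2⟩, h2⟩

def csum (S : Finset (Fin D)) (k : Fin D) : ℕ := (S.filter (· < k)).card

lemma csum_bot (S : Finset (Fin D)) (k : Fin D) (hk : k.1 = 0) : csum S k = 0 := by
  unfold csum
  rw [Finset.card_eq_zero]
  ext x
  simp only [Finset.mem_filter, Finset.notMem_empty, iff_false, not_and]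
  intro _
  rw [Fin.lt_def, hk]
  omega

lemma csum_last (S : Finset (Fin D)) (hS : ∀ x ∈ S, x.1 + 1 < D) (k : Fin D)
    (hk : k.1 = D - 1) : csum S k = S.card := by
  unfold csum
  congr 1
  apply Finset.filter_true_of_mem
  intro x hx
  rw [Fin.lt_def, hk]
  have := hS x hx
  omega

lemma csum_succ (S : Finset (Fin D)) (k : Fin D) (h : k.1 + 1 < D) :
    csum S (k + 1) = csum S k + (if k ∈ S then 1 else 0) := by
  unfold csum
  have hsplit : (S.filter (· < k + 1)) = (S.filter (· < k)) ∪ S.filter (· = k) := by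
    ext x
    simp only [Finset.mem_filter, Finset.mem_union]
    constructor
    · rintro ⟨hx, hlt⟩
      rw [Fin.lt_def, val_succ k h] at hlt
      rcases Nat.lt_or_ge x.1 k.1 with h1 | h1
      · exact Or.inl ⟨hx, Fin.lt_def.2 h1⟩
      · exact Or.inr ⟨hx, Fin.ext (by omega)⟩
    · rintro (⟨hx, hlt⟩ | ⟨hx, heq⟩)
      · refine ⟨hx, ?_⟩
        rw [Fin.lt_def, val_succ k h]
        rw [Fin.lt_def] at hlt
        omega
      · refine ⟨hx, ?_⟩
        rw [Fin.lt_def, val_succ k h, heq]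
        omega
  rw [hsplit, Finset.card_union_of_disjoint, Finset.filter_eq']
  · split <;> simp
  · rw [Finset.disjoint_left]
    rintro x hx hx'
    simp only [Finset.mem_filter] at hx hx'
    rw [hx'.2] at hx
    exact lt_irrefl _ hx.2

theorem card_TSet (M : ℕ) (S : Finset (Fin D)) (hS : ∀ k ∈ S, k.1 + 1 < D) :
    (TSet M S).card = (M + D - S.card).choose D := by
  have hD : 0 < D := Nat.pos_of_ne_zero (NeZero.ne D)
  have hsD : S.card ≤ D := by
    calc S.card ≤ (univ : Finset (Fin D)).card := card_le_card (subset_univ S)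
    _ = D := by simp
  set s := S.card with hs
  set z : Fin D := ⟨0, hD⟩ with hz
  set w : Fin D := ⟨D - 1, by omega⟩ with hw
  set v : (Fin D → ℤ) → Fin D → ℤ := fun t k => t k + k.1 - csum S k with hv
  have hvadj : ∀ t, stepOK S t → ∀ k : Fin D, k.1 + 1 < D → v t k + 1 ≤ v t (k + 1) := by
    intro t ht k hk
    have h1 := ht k hk
    have h2 := csum_succ S k hk
    have h3 := val_succ k hk
    by_cases hkS : k ∈ S
    · have h4 := h1.2 hkS
      simp only [hv]
      rw [h2, h3, if_pos hkS]
      push_cast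
      omega
    · simp only [hv]
      rw [h2, h3, if_neg hkS]
      have h4 := h1.1
      push_cast
      omega
  have hvz : ∀ t, v t z = t z := by
    intro t
    simp only [hv]
    rw [csum_bot S z rfl]
    simp [hz]
  have hvw : ∀ t, v t w = t w + (D - 1 : ℕ) - s := by
    intro t
    simp only [hv]
    rw [csum_last S hS w rfl]
  have hDcast : ((D - 1 : ℕ) : ℤ) = (D : ℤ) - 1 := by omega
  have hvbound : ∀ t ∈ TSet M S, ∀ k : Fin D, 0 ≤ v t k ∧ v t k ≤ (M : ℤ) + D - 1 - s := by
    intro t ht k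
    rw [mem_TSet] at ht
    have hmono := add_le_of_adj 1 (v t) (hvadj t ht.2)
    have hzk : z ≤ k := Fin.le_def.2 (Nat.zero_le _)
    have hkw : k ≤ w := Fin.le_def.2 (by have := k.2; simp only [hw]; omega)
    have h1 : v t z + ((k.1 - z.1 : ℕ) : ℤ) * 1 ≤ v t k := hmono z k hzk
    have h2 : v t k + ((w.1 - k.1 : ℕ) : ℤ) * 1 ≤ v t w := hmono k w hkw
    have hb1 : (0 : ℤ) ≤ t z := (ht.1 z).1
    have hb2 : t w ≤ (M : ℤ) := (ht.1 w).2
    have hc1 : (0:ℤ) ≤ ((k.1 - z.1 : ℕ) : ℤ) := Int.natCast_nonneg _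
    have hc2 : (0:ℤ) ≤ ((w.1 - k.1 : ℕ) : ℤ) := Int.natCast_nonneg _
    have hvzt := hvz t
    have hvwt := hvw t
    constructor
    · linarith
    · rw [hvwt, hDcast] at h2
      linarith
  rcases Nat.lt_or_ge M s with hMs | hMs
  · -- empty case
    have hempty : TSet M S = ∅ := by
      rw [Finset.eq_empty_iff_forall_notMem]
      intro t ht
      have h1 := (hvbound t ht z).1
      have h4 := (hvbound t ht w).2
      have h3 := add_le_of_adj 1 (v t) (hvadj t ((mem_TSet).1 ht).2) z w
        (Fin.le_def.2 (Nat.zero_le _))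
      have hzw : ((w.1 - z.1 : ℕ) : ℤ) = (D : ℤ) - 1 := by
        simp only [hw, hz]
        omega
      rw [hzw] at h3
      omega
    rw [hempty]
    simp only [Finset.card_empty]
    symm
    apply Nat.choose_eq_zero_of_lt
    omega
  · -- bijection with powersetCard
    have hIcc : (Finset.Icc (0 : ℤ) ((M : ℤ) + D - 1 - s)).card = M + D - s := by
      rw [Int.card_Icc]
      omega
    rw [show (M + D - s).choose D =
        ((Finset.Icc (0 : ℤ) ((M : ℤ) + D - 1 - s)).powersetCard D).card by
      rw [Finset.card_powersetCard, hIcc]]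
    have hvsm : ∀ t ∈ TSet M S, StrictMono (v t) := fun t ht =>
      strictMono_of_adj _ (fun k hk => by
        have := hvadj t ((mem_TSet.1 ht).2) k hk; omega)
    refine Finset.card_bij' (fun t (_ : t ∈ TSet M S) => Finset.image (v t) univ)
      (fun A hA => fun k =>
        A.orderEmbOfFin (Finset.mem_powersetCard.1 hA).2 k - k.1 + csum S k)
      ?hi ?hj ?leftinv ?rightinv
    case hi =>
      intro t ht
      rw [Finset.mem_powersetCard]
      constructor
      · intro x hx
        rcases Finset.mem_image.1 hx with ⟨k, _, rfl⟩
        rw [Finset.mem_Icc]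
        exact hvbound t ht k
      · rw [Finset.card_image_of_injective _ (hvsm t ht).injective, card_univ, Fintype.card_fin]
    case hj =>
      intro A hA
      have hAsub := (Finset.mem_powersetCard.1 hA).1
      have hAc : A.card = D := (Finset.mem_powersetCard.1 hA).2
      set wA : Fin D ↪o ℤ := A.orderEmbOfFin hAc with hwA
      have hmem : ∀ k, 0 ≤ wA k ∧ wA k ≤ (M : ℤ) + D - 1 - s := by
        intro k
        have := hAsub (Finset.orderEmbOfFin_mem A hAc k)
        rw [Finset.mem_Icc] at this
        exact this
      have hadj : ∀ k : Fin D, k.1 + 1 < D → wA k + 1 ≤ wA (k + 1) := by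
        intro k hk
        have := wA.strictMono (lt_succ k hk)
        omega
      have hstep : stepOK S (fun k => wA k - k.1 + csum S k) := by
        intro k hk
        have h1 := hadj k hk
        have h2 := csum_succ S k hk
        have h3 := val_succ k hk
        constructor
        · simp only [h2, h3]
          split <;> push_cast <;> omega
        · intro hkS
          simp only [h2, h3, if_pos hkS]
          push_cast
          omega
      have hmono := add_le_of_adj 0 (fun k => wA k - k.1 + csum S k)
        (fun k hk => by have := (hstep k hk).1; beta_reduce at this ⊢; omega)
      have hbnd : ∀ k, 0 ≤ wA k - (k.1 : ℤ) + csum S k ∧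
          wA k - (k.1 : ℤ) + csum S k ≤ (M : ℤ) := by
        intro k
        have h1 := hmono z k (Fin.le_def.2 (Nat.zero_le _))
        have h2 := hmono k w (Fin.le_def.2 (by have := k.2; simp only [hw]; omega))
        simp only [mul_zero, add_zero] at h1 h2
        have hz1 : wA z - (z.1 : ℤ) + (csum S z : ℤ) = wA z := by
          rw [csum_bot S z rfl]
          simp [hz]
        have hw1 : wA w - (w.1 : ℤ) + (csum S w : ℤ) = wA w - ((D : ℤ) - 1) + s := by
          rw [csum_last S hS w rfl]
          simp only [hw]
          push_cast
          omega
        rw [hz1] at h1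
        rw [hw1] at h2
        have h3 := (hmem z).1
        have h4 := (hmem w).2
        omega
      rw [mem_TSet]
      exact ⟨hbnd, hstep⟩
    case leftinv =>
      intro t ht
      have hcard : (Finset.image (v t) univ).card = D := by
        rw [Finset.card_image_of_injective _ (hvsm t ht).injective, card_univ, Fintype.card_fin]
      have huniq : v t = ⇑((Finset.image (v t) univ).orderEmbOfFin hcard) :=
        Finset.orderEmbOfFin_unique hcard
          (fun x => Finset.mem_image_of_mem _ (Finset.mem_univ x)) (hvsm t ht)
      funext k
      show (Finset.image (v t) univ).orderEmbOfFin _ k - k.1 + csum S k = t k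
      rw [← congrFun huniq k]
      simp only [hv]
      ring
    case rightinv =>
      intro A hA
      beta_reduce
      have hAsub := (Finset.mem_powersetCard.1 hA).1
      have hAc := (Finset.mem_powersetCard.1 hA).2
      have hveq : v (fun k => A.orderEmbOfFin (Finset.mem_powersetCard.1 hA).2 k - k.1 + csum S k)
          = fun k => A.orderEmbOfFin hAc k := by
        funext k
        simp only [hv]
        ring
      rw [hveq]
      apply Finset.eq_of_subset_of_card_le
      · intro x hx
        rcases Finset.mem_image.1 hx with ⟨k, _, rfl⟩
        exact Finset.orderEmbOfFin_mem A hAc k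
      · rw [Finset.card_image_of_injective _ (A.orderEmbOfFin hAc).strictMono.injective,
          card_univ, Fintype.card_fin, hAc]
end Seq

section Sorting
variable {D : ℕ} [NeZero D] {V : Type*} [Fintype V] [DecidableEq V]

lemma sort_exists_unique (hcard : Fintype.card V = D) (key : V → ℤ ×ₗ ℤ)
    (hkey : Function.Injective key) :
    ∃! σ : Fin D ≃ V, StrictMono (key ∘ ⇑σ) := by
  have hs : (Finset.image key univ).card = D := by
    rw [Finset.card_image_of_injective _ hkey, card_univ, hcard]
  set emb := (Finset.image key univ).orderEmbOfFin hs with hemb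
  have hmem : ∀ k, ∃ v : V, key v = emb k := by
    intro k
    have := Finset.orderEmbOfFin_mem _ hs k
    rcases Finset.mem_image.1 this with ⟨v, _, hv⟩
    exact ⟨v, hv⟩
  choose f hf using hmem
  have hinj : Function.Injective f := by
    intro a b hab
    apply emb.injective
    rw [← hf a, ← hf b, hab]
  have hbij : Function.Bijective f :=
    (Fintype.bijective_iff_injective_and_card f).2
      ⟨hinj, by rw [Fintype.card_fin, hcard]⟩
  have hcomp : key ∘ ⇑(Equiv.ofBijective f hbij) = ⇑emb := funext fun k => hf k
  refine ⟨Equiv.ofBijective f hbij, ?_, ?_⟩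
  · show StrictMono (key ∘ ⇑(Equiv.ofBijective f hbij))
    rw [hcomp]
    exact emb.strictMono
  · intro τ hτ
    have h1 : (key ∘ ⇑τ) = ⇑emb :=
      Finset.orderEmbOfFin_unique hs (fun x => Finset.mem_image_of_mem _ (mem_univ _)) hτ
    apply Equiv.ext
    intro k
    apply hkey
    have h2 : key (τ k) = emb k := congrFun h1 k
    have h3 : key (Equiv.ofBijective f hbij k) = emb k := congrFun hcomp k
    rw [h2, h3]

noncomputable def sortPerm (hcard : Fintype.card V = D) (key : V → ℤ ×ₗ ℤ)
    (hkey : Function.Injective key) : Fin D ≃ V :=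
  (sort_exists_unique hcard key hkey).exists.choose

lemma sortPerm_strictMono (hcard : Fintype.card V = D) (key : V → ℤ ×ₗ ℤ)
    (hkey : Function.Injective key) :
    StrictMono (key ∘ ⇑(sortPerm hcard key hkey)) :=
  (sort_exists_unique hcard key hkey).exists.choose_spec

lemma sortPerm_eq_iff (hcard : Fintype.card V = D) (key : V → ℤ ×ₗ ℤ)
    (hkey : Function.Injective key) (σ : Fin D ≃ V) :
    sortPerm hcard key hkey = σ ↔ StrictMono (key ∘ ⇑σ) := by
  constructor
  · rintro rfl
    exact sortPerm_strictMono hcard key hkey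
  · intro h
    exact (sort_exists_unique hcard key hkey).unique
      (sortPerm_strictMono hcard key hkey) h

noncomputable def GSet (R : V → V → Prop) (cmp : ℤ → ℤ → Prop) (M : ℕ) : Finset (V → ℤ) :=
  (Finset.Icc 0 (fun _ => (M : ℤ))).filter (fun g => ∀ i j, R i j → cmp (g i) (g j))

lemma mem_GSet {R : V → V → Prop} {cmp : ℤ → ℤ → Prop} {M : ℕ} {g : V → ℤ} :
    g ∈ GSet R cmp M ↔ (∀ v, 0 ≤ g v ∧ g v ≤ (M : ℤ)) ∧ ∀ i j, R i j → cmp (g i) (g j) := by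
  simp only [GSet, Finset.mem_filter, Finset.mem_Icc, Pi.le_def]
  constructor
  · rintro ⟨⟨h1, h2⟩, h3⟩
    exact ⟨fun v => ⟨h1 v, h2 v⟩, h3⟩
  · rintro ⟨h1, h2⟩
    exact ⟨⟨fun v => (h1 v).1, fun v => (h1 v).2⟩, h2⟩

noncomputable def LExt (D : ℕ) [NeZero D] (R : V → V → Prop) : Finset (Fin D ≃ V) :=
  univ.filter (fun σ => ∀ i j, R i j → σ.symm i < σ.symm j)

lemma mem_LExt {R : V → V → Prop} {σ : Fin D ≃ V} :
    σ ∈ LExt D R ↔ ∀ i j, R i j → σ.symm i < σ.symm j := by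
  simp [LExt]

noncomputable def SSet (ε : V → ℤ) (σ : Fin D ≃ V) : Finset (Fin D) :=
  univ.filter (fun k => k.1 + 1 < D ∧ ε (σ (k + 1)) < ε (σ k))

lemma mem_SSet {ε : V → ℤ} {σ : Fin D ≃ V} {k : Fin D} :
    k ∈ SSet ε σ ↔ k.1 + 1 < D ∧ ε (σ (k + 1)) < ε (σ k) := by
  simp [SSet]

lemma SSet_subset {ε : V → ℤ} {σ : Fin D ≃ V} : ∀ k ∈ SSet ε σ, k.1 + 1 < D :=
  fun _ hk => (mem_SSet.1 hk).1

lemma bridge {ε : V → ℤ} (hε : Function.Injective ε) (g : V → ℤ) (σ : Fin D ≃ V) :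
    StrictMono ((fun v => toLex (g v, ε v)) ∘ ⇑σ) ↔
      stepOK (SSet ε σ) (fun k => g (σ k)) := by
  constructor
  · intro h k hk
    have hlt := h (lt_succ k hk)
    simp only [Function.comp_apply] at hlt
    rw [Prod.Lex.lt_iff] at hlt
    constructor
    · rcases hlt with h1 | ⟨h1, _⟩
      · exact le_of_lt h1
      · exact le_of_eq h1
    · intro hkS
      have hS2 := (mem_SSet.1 hkS).2
      rcases hlt with h1 | ⟨_, h2⟩
      · exact h1
      · exact absurd h2 (not_lt_of_gt hS2)
  · intro h
    apply strictMono_of_adj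
    intro k hk
    simp only [Function.comp_apply]
    rw [Prod.Lex.lt_iff]
    have h1 := h k hk
    by_cases hkS : k ∈ SSet ε σ
    · exact Or.inl (h1.2 hkS)
    · have hne : ε (σ k) ≠ ε (σ (k + 1)) := by
        intro he
        have : σ k = σ (k + 1) := hε he
        have : k = k + 1 := σ.injective this
        have := congrArg Fin.val this
        rw [val_succ k hk] at this
        omega
      have hεlt : ε (σ k) < ε (σ (k + 1)) := by
        rcases lt_or_gt_of_ne hne with h2 | h2
        · exact h2
        · exact absurd (mem_SSet.2 ⟨hk, h2⟩) hkS
      rcases lt_or_eq_of_le h1.1 with h2 | h2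
      · exact Or.inl h2
      · exact Or.inr ⟨h2, hεlt⟩

theorem card_GSet (hcard : Fintype.card V = D) (R : V → V → Prop) (cmp : ℤ → ℤ → Prop)
    (ε : V → ℤ) (hε : Function.Injective ε)
    (hfwd : ∀ i j, R i j → ∀ a b : ℤ, toLex (a, ε i) < toLex (b, ε j) → cmp a b)
    (hbwd : ∀ i j, R i j → ∀ a b : ℤ, cmp a b → toLex (a, ε i) < toLex (b, ε j))
    (M : ℕ) :
    (GSet R cmp M).card = ∑ σ ∈ LExt D R, (M + D - (SSet ε σ).card).choose D := by
  set key : (V → ℤ) → V → ℤ ×ₗ ℤ := fun g v => toLex (g v, ε v) with hkeydef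
  have hkeyinj : ∀ g, Function.Injective (key g) := by
    intro g a b hab
    apply hε
    have h1 : (ofLex (key g a)).2 = (ofLex (key g b)).2 := by rw [hab]
    exact h1
  set srt : (V → ℤ) → Fin D ≃ V := fun g => sortPerm hcard (key g) (hkeyinj g) with hsrt
  have hclass : ∀ g, StrictMono (key g ∘ ⇑(srt g)) :=
    fun g => sortPerm_strictMono hcard (key g) (hkeyinj g)
  rw [Finset.card_eq_sum_card_fiberwise (f := srt) (t := LExt D R) ?hmaps]
  case hmaps =>
    intro g hg
    rw [Finset.mem_coe, mem_LExt]
    intro i j hR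
    have hkij : key g i < key g j :=
      hbwd i j hR (g i) (g j) ((mem_GSet.1 hg).2 i j hR)
    have := (hclass g).lt_iff_lt (a := (srt g).symm i) (b := (srt g).symm j)
    simp only [Function.comp_apply, Equiv.apply_symm_apply] at this
    exact this.1 hkij
  apply Finset.sum_congr rfl
  intro σ hσ
  rw [← card_TSet M (SSet ε σ) SSet_subset]
  refine Finset.card_bij' (fun g _ => fun k => g (σ k)) (fun t _ => fun v => t (σ.symm v))
    ?hi ?hj ?li ?ri
  case hi =>
    intro g hg
    rw [Finset.mem_filter] at hg
    rw [mem_TSet]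
    constructor
    · intro k
      exact (mem_GSet.1 hg.1).1 (σ k)
    · have : StrictMono (key g ∘ ⇑σ) := by
        rw [← sortPerm_eq_iff hcard (key g) (hkeyinj g) σ]
        exact hg.2
      exact (bridge hε g σ).1 this
  case hj =>
    intro t ht
    rw [mem_TSet] at ht
    have hgdef : ∀ k, (fun v => t (σ.symm v)) (σ k) = t k := by
      intro k
      simp
    have hsm : StrictMono (key (fun v => t (σ.symm v)) ∘ ⇑σ) := by
      rw [bridge hε]
      have : (fun k => (fun v => t (σ.symm v)) (σ k)) = t := funext hgdef
      rw [this]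
      exact ht.2
    rw [Finset.mem_filter]
    constructor
    · rw [mem_GSet]
      constructor
      · intro v
        exact ht.1 (σ.symm v)
      · intro i j hR
        apply hfwd i j hR
        have hpos := mem_LExt.1 hσ i j hR
        have := hsm hpos
        simp only [Function.comp_apply, Equiv.apply_symm_apply] at this
        exact this
    · rw [sortPerm_eq_iff]
      exact hsm
  case li =>
    intro g hg
    funext v
    simp
  case ri =>
    intro t ht
    funext k
    simp

end Sorting

section NegSSet
variable {D : ℕ} [NeZero D] {V : Type*} [Fintype V] [DecidableEq V]

lemma card_filter_adj : (univ.filter (fun k : Fin D => k.1 + 1 < D)).card = D - 1 := by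
  have hD : 0 < D := Nat.pos_of_ne_zero (NeZero.ne D)
  have hneg : (univ.filter (fun k : Fin D => ¬ (k.1 + 1 < D))) = {(⟨D - 1, by omega⟩ : Fin D)} := by
    ext k
    simp only [Finset.mem_filter, Finset.mem_univ, true_and, Finset.mem_singleton]
    constructor
    · intro h
      have hk2 := k.2
      exact Fin.ext (show k.1 = D - 1 by omega)
    · intro h
      rw [h]
      show ¬ (D - 1 + 1 < D)
      omega
  have := Finset.card_filter_add_card_filter_not
    (s := (univ : Finset (Fin D))) (p := fun k : Fin D => k.1 + 1 < D)
  rw [hneg] at this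
  simp only [Finset.card_singleton, card_univ, Fintype.card_fin] at this
  omega

lemma SSet_card_add_neg {ε : V → ℤ} (hε : Function.Injective ε) (σ : Fin D ≃ V) :
    (SSet ε σ).card + (SSet (fun v => -(ε v)) σ).card = D - 1 := by
  have hdisj : Disjoint (SSet ε σ) (SSet (fun v => -(ε v)) σ) := by
    rw [Finset.disjoint_left]
    intro k hk hk'
    have h1 := (mem_SSet.1 hk).2
    have h2 := (mem_SSet.1 hk').2
    omega
  rw [← Finset.card_union_of_disjoint hdisj]
  have hun : SSet ε σ ∪ SSet (fun v => -(ε v)) σ = univ.filter (fun k : Fin D => k.1 + 1 < D) := by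
    ext k
    simp only [Finset.mem_union, mem_SSet, Finset.mem_filter, Finset.mem_univ, true_and]
    constructor
    · rintro (⟨h, _⟩ | ⟨h, _⟩) <;> exact h
    · intro h
      have hne : ε (σ (k + 1)) ≠ ε (σ k) := by
        intro he
        have h1 : σ (k + 1) = σ k := hε he
        have h2 : k + 1 = k := σ.injective h1
        have := congrArg Fin.val h2
        rw [val_succ k h] at this
        omega
      rcases lt_or_gt_of_ne hne with h1 | h1
      · exact Or.inl ⟨h, h1⟩
      · exact Or.inr ⟨h, by omega⟩
  rw [hun, card_filter_adj]

end NegSSet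

section Crown
variable (ℓ : ℕ) [NeZero (2 * ℓ)]

def crownR (i j : ZMod (2 * ℓ)) : Prop :=
  Even i.val ∧ (j = i + 1 ∨ i = j + 1)

noncomputable def lblz (i : ZMod (2 * ℓ)) : ℤ :=
  (if Even i.val then 0 else (2 * ℓ : ℤ)) + i.val

variable {ℓ}

lemma parity_succ (hl : 2 ≤ ℓ) (i : ZMod (2 * ℓ)) :
    Even ((i + 1 : ZMod (2 * ℓ)).val) ↔ ¬ Even i.val := by
  have h1 : (1 : ZMod (2 * ℓ)).val = 1 := by
    rw [ZMod.val_one_eq_one_mod]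
    exact Nat.mod_eq_of_lt (by omega)
  have hv : (i + 1 : ZMod (2 * ℓ)).val = (i.val + 1) % (2 * ℓ) := by
    rw [ZMod.val_add, h1]
  have hd : (2 : ℕ) ∣ 2 * ℓ := ⟨ℓ, rfl⟩
  rw [hv, Nat.even_iff, Nat.even_iff, Nat.mod_mod_of_dvd _ hd]
  omega

lemma lblz_inj (hl : 2 ≤ ℓ) : Function.Injective (lblz ℓ) := by
  intro a b hab
  have ha := ZMod.val_lt a
  have hb := ZMod.val_lt b
  unfold lblz at hab
  apply ZMod.val_injective
  by_cases h1 : Even a.val <;> by_cases h2 : Even b.val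
  · rw [if_pos h1, if_pos h2] at hab
    omega
  · rw [if_pos h1, if_neg h2] at hab
    omega
  · rw [if_neg h1, if_pos h2] at hab
    omega
  · rw [if_neg h1, if_neg h2] at hab
    omega

lemma crownR_nat (hl : 2 ≤ ℓ) {i j : ZMod (2 * ℓ)} (h : crownR ℓ i j) :
    lblz ℓ i < lblz ℓ j := by
  have ha := ZMod.val_lt i
  have hb := ZMod.val_lt j
  have hi : Even i.val := h.1
  have hj : ¬ Even j.val := by
    rcases h.2 with h2 | h2
    · rw [h2]
      rw [parity_succ hl i]
      exact fun hc => hc hi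
    · have := (parity_succ hl j).1 (h2 ▸ hi)
      exact this
  unfold lblz
  rw [if_pos hi, if_neg hj]
  omega

lemma crownR_ne (hl : 2 ≤ ℓ) {i j : ZMod (2 * ℓ)} (h : crownR ℓ i j) : i ≠ j := by
  intro he
  have := crownR_nat hl h
  rw [he] at this
  omega

lemma adj_parity (hl : 2 ≤ ℓ) {i j : ZMod (2 * ℓ)}
    (h : j = i + 1 ∨ i = j + 1) : (Even i.val ↔ ¬ Even j.val) := by
  rcases h with h | h
  · rw [h, parity_succ hl i]
    tauto
  · rw [h]
    exact parity_succ hl j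

lemma adj_iff (hl : 2 ≤ ℓ) {i j : ZMod (2 * ℓ)} :
    (circularGraph (2 * ℓ)).Adj i j ↔ crownR ℓ i j ∨ crownR ℓ j i := by
  constructor
  · rintro (⟨hne, hd⟩ : i ≠ j ∧ (j = i + 1 ∨ i = j + 1))
    by_cases hi : Even i.val
    · exact Or.inl ⟨hi, hd⟩
    · have hj : Even j.val := by
        have := adj_parity hl hd
        tauto
      exact Or.inr ⟨hj, hd.symm⟩
  · rintro (h | h)
    · exact (⟨crownR_ne hl h, h.2⟩ : i ≠ j ∧ (j = i + 1 ∨ i = j + 1))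
    · exact (⟨(crownR_ne hl h).symm, h.2.symm⟩ : i ≠ j ∧ (j = i + 1 ∨ i = j + 1))

lemma crownR_succ {i : ZMod (2 * ℓ)} (h : Even i.val) : crownR ℓ i (i + 1) :=
  ⟨h, Or.inl rfl⟩

lemma crownR_pred (hl : 2 ≤ ℓ) {j : ZMod (2 * ℓ)} (h : ¬ Even j.val) :
    crownR ℓ (j - 1) j := by
  constructor
  · have h1 := parity_succ hl (j - 1)
    rw [sub_add_cancel] at h1
    tauto
  · exact Or.inl (by ring)

variable (ℓ)

noncomputable def SFin (n : ℕ) : Finset (ZMod (2 * ℓ) → ℤ) :=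
  (Finset.Icc 0 (fun _ => (n : ℤ))).filter
    (fun m => ∀ i j, (circularGraph (2 * ℓ)).Adj i j → m i + m j ≤ (n : ℤ))

variable {ℓ}

lemma mem_SFin {n : ℕ} {m : ZMod (2 * ℓ) → ℤ} :
    m ∈ SFin ℓ n ↔ (∀ v, 0 ≤ m v ∧ m v ≤ (n : ℤ)) ∧
      ∀ i j, (circularGraph (2 * ℓ)).Adj i j → m i + m j ≤ (n : ℤ) := by
  simp only [SFin, Finset.mem_filter, Finset.mem_Icc, Pi.le_def]
  constructor
  · rintro ⟨⟨h1, h2⟩, h3⟩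
    exact ⟨fun v => ⟨h1 v, h2 v⟩, h3⟩
  · rintro ⟨h1, h2⟩
    exact ⟨⟨fun v => (h1 v).1, fun v => (h1 v).2⟩, h2⟩

lemma card_SFin_weak (hl : 2 ≤ ℓ) (n : ℕ) :
    (SFin ℓ n).card = (GSet (crownR ℓ) (· ≤ ·) n).card := by
  refine Finset.card_bij'
    (fun m _ => fun i => if Even i.val then m i else (n : ℤ) - m i)
    (fun g _ => fun i => if Even i.val then g i else (n : ℤ) - g i) ?_ ?_ ?_ ?_
  · intro m hm
    rw [mem_SFin] at hm
    rw [mem_GSet]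
    constructor
    · intro v
      have := hm.1 v
      by_cases hv : Even v.val <;> simp only [hv, if_true, if_false] <;> omega
    · intro i j hR
      have hAdj : (circularGraph (2 * ℓ)).Adj i j := (adj_iff hl).2 (Or.inl hR)
      have hedge := hm.2 i j hAdj
      have hi : Even i.val := hR.1
      have hj : ¬ Even j.val := by have := adj_parity hl hR.2; tauto
      simp only [hi, hj, if_true, if_false]
      omega
  · intro g hg
    rw [mem_GSet] at hg
    rw [mem_SFin]
    constructor
    · intro v
      have := hg.1 v
      by_cases hv : Even v.val <;> simp only [hv, if_true, if_false] <;> omega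
    · rintro i j (hAdj : i ≠ j ∧ (j = i + 1 ∨ i = j + 1))
      have hpar := adj_parity hl hAdj.2
      by_cases hi : Even i.val
      · have hj : ¬ Even j.val := by tauto
        have hR : crownR ℓ i j := ⟨hi, hAdj.2⟩
        have := hg.2 i j hR
        simp only [hi, hj, if_true, if_false]
        omega
      · have hj : Even j.val := by tauto
        have hR : crownR ℓ j i := ⟨hj, hAdj.2.symm⟩
        have := hg.2 j i hR
        simp only [hi, hj, if_true, if_false]
        omega
  · intro m _
    funext v
    by_cases hv : Even v.val <;> simp [hv]
  · intro g _
    funext v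
    by_cases hv : Even v.val <;> simp [hv]

lemma card_SFin_strict (hl : 2 ≤ ℓ) (n : ℕ) :
    (SFin ℓ n).card = (GSet (crownR ℓ) (· < ·) (n + 1)).card := by
  refine Finset.card_bij'
    (fun m _ => fun i => if Even i.val then m i else (n + 1 : ℤ) - m i)
    (fun g _ => fun i => if Even i.val then g i else (n + 1 : ℤ) - g i) ?_ ?_ ?_ ?_
  · intro m hm
    rw [mem_SFin] at hm
    rw [mem_GSet]
    constructor
    · intro v
      have := hm.1 v
      by_cases hv : Even v.val <;> simp only [hv, if_true, if_false] <;> push_cast <;> omega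
    · intro i j hR
      have hAdj : (circularGraph (2 * ℓ)).Adj i j := (adj_iff hl).2 (Or.inl hR)
      have hedge := hm.2 i j hAdj
      have hi : Even i.val := hR.1
      have hj : ¬ Even j.val := by have := adj_parity hl hR.2; tauto
      simp only [hi, hj, if_true, if_false]
      omega
  · intro g hg
    rw [mem_GSet] at hg
    rw [mem_SFin]
    have hbnd : ∀ v, (Even v.val → 0 ≤ g v ∧ g v ≤ (n : ℤ)) ∧
        (¬ Even v.val → 1 ≤ g v ∧ g v ≤ (n + 1 : ℤ)) := by
      intro v
      constructor
      · intro hv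
        have h1 := hg.1 v
        have h2 := hg.2 v (v + 1) (crownR_succ hv)
        have h3 := hg.1 (v + 1)
        push_cast at h1 h3
        omega
      · intro hv
        have h1 := hg.1 v
        have h2 := hg.2 (v - 1) v (crownR_pred hl hv)
        have h3 := hg.1 (v - 1)
        push_cast at h1 h3
        omega
    constructor
    · intro v
      by_cases hv : Even v.val
      · have := (hbnd v).1 hv
        simp only [hv, if_true]
        omega
      · have := (hbnd v).2 hv
        simp only [hv, if_false]
        omega
    · rintro i j (hAdj : i ≠ j ∧ (j = i + 1 ∨ i = j + 1))
      have hpar := adj_parity hl hAdj.2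
      by_cases hi : Even i.val
      · have hj : ¬ Even j.val := by tauto
        have hR : crownR ℓ i j := ⟨hi, hAdj.2⟩
        have := hg.2 i j hR
        simp only [hi, hj, if_true, if_false]
        omega
      · have hj : Even j.val := by tauto
        have hR : crownR ℓ j i := ⟨hj, hAdj.2.symm⟩
        have := hg.2 j i hR
        simp only [hi, hj, if_true, if_false]
        omega
  · intro m _
    funext v
    by_cases hv : Even v.val <;> simp [hv]
  · intro g _
    funext v
    by_cases hv : Even v.val <;> simp [hv]

end Crown

section Final
variable {ℓ : ℕ} [NeZero (2 * ℓ)]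

theorem F1 (hl : 2 ≤ ℓ) (n : ℕ) :
    (SFin ℓ n).card = ∑ σ ∈ LExt (2 * ℓ) (crownR ℓ),
      (n + 2 * ℓ - (SSet (lblz ℓ) σ).card).choose (2 * ℓ) := by
  rw [card_SFin_weak hl n]
  refine card_GSet (ZMod.card _) (crownR ℓ) (· ≤ ·) (lblz ℓ) (lblz_inj hl) ?_ ?_ n
  · intro i j hR a b hlt
    rw [Prod.Lex.lt_iff] at hlt
    rcases hlt with h | ⟨h, _⟩
    · exact le_of_lt h
    · exact le_of_eq h
  · intro i j hR a b hle
    rw [Prod.Lex.lt_iff]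
    rcases lt_or_eq_of_le hle with h | h
    · exact Or.inl h
    · exact Or.inr ⟨h, crownR_nat hl hR⟩

theorem F2 (hl : 2 ≤ ℓ) (n : ℕ) :
    (SFin ℓ n).card = ∑ σ ∈ LExt (2 * ℓ) (crownR ℓ),
      (n + 2 + (SSet (lblz ℓ) σ).card).choose (2 * ℓ) := by
  rw [card_SFin_strict hl n]
  rw [card_GSet (ZMod.card _) (crownR ℓ) (· < ·) (fun v => -(lblz ℓ v))
    (fun a b hab => lblz_inj hl (neg_inj.1 hab)) ?_ ?_ (n + 1)]
  · apply Finset.sum_congr rfl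
    intro σ _
    congr 1
    have hadd := SSet_card_add_neg (lblz_inj hl) σ
    omega
  · intro i j hR a b hlt
    rw [Prod.Lex.lt_iff] at hlt
    rcases hlt with h | ⟨_, h2⟩
    · exact h
    · exfalso
      have h3 : -(lblz ℓ i) < -(lblz ℓ j) := h2
      have := crownR_nat hl hR
      omega
  · intro i j hR a b hlt
    rw [Prod.Lex.lt_iff]
    exact Or.inl hlt

lemma crownR_zero_one (hl : 2 ≤ ℓ) : crownR ℓ (0 : ZMod (2 * ℓ)) 1 := by
  constructor
  · rw [ZMod.val_zero]
    exact Even.zero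
  · exact Or.inl (by ring)

lemma desc_le (hl : 2 ≤ ℓ) {σ : Fin (2 * ℓ) ≃ ZMod (2 * ℓ)}
    (hσ : σ ∈ LExt (2 * ℓ) (crownR ℓ)) :
    (SSet (lblz ℓ) σ).card ≤ 2 * ℓ - 2 := by
  by_contra hc
  push_neg at hc
  have hsub : SSet (lblz ℓ) σ ⊆ univ.filter (fun k : Fin (2 * ℓ) => k.1 + 1 < 2 * ℓ) := by
    intro k hk
    simp only [Finset.mem_filter, Finset.mem_univ, true_and]
    exact (mem_SSet.1 hk).1
  have heq : SSet (lblz ℓ) σ = univ.filter (fun k : Fin (2 * ℓ) => k.1 + 1 < 2 * ℓ) := by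
    apply Finset.eq_of_subset_of_card_le hsub
    rw [card_filter_adj]
    omega
  have hchain : ∀ a b : Fin (2 * ℓ), a < b → lblz ℓ (σ b) < lblz ℓ (σ a) := by
    apply rel_of_adj (r := fun x y : ℤ => y < x)
      (htr := fun x y z (h1 : y < x) (h2 : z < y) => lt_trans h2 h1)
    intro k hk
    have : k ∈ SSet (lblz ℓ) σ := by
      rw [heq]
      simp only [Finset.mem_filter, Finset.mem_univ, true_and]
      exact hk
    exact (mem_SSet.1 this).2
  have hR01 := crownR_zero_one hl
  have hpos := mem_LExt.1 hσ 0 1 hR01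
  have h1 := hchain _ _ hpos
  rw [Equiv.apply_symm_apply, Equiv.apply_symm_apply] at h1
  have h2 := crownR_nat hl hR01
  omega

lemma exists_desc_zero (hl : 2 ≤ ℓ) :
    ∃ σ ∈ LExt (2 * ℓ) (crownR ℓ), (SSet (lblz ℓ) σ).card = 0 := by
  have hki : Function.Injective (fun v : ZMod (2 * ℓ) => toLex ((0 : ℤ), lblz ℓ v)) := by
    intro a b hab
    have h2 : ((0 : ℤ), lblz ℓ a) = ((0 : ℤ), lblz ℓ b) := by
      have h3 : toLex ((0 : ℤ), lblz ℓ a) = toLex ((0 : ℤ), lblz ℓ b) := hab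
      simpa [toLex_inj] using h3
    exact lblz_inj hl (congrArg Prod.snd h2)
  set σ₀ := sortPerm (ZMod.card _) _ hki with hσ₀
  have hsm := sortPerm_strictMono (ZMod.card _) _ hki
  have hmono : ∀ a b : Fin (2 * ℓ), a < b → lblz ℓ (σ₀ a) < lblz ℓ (σ₀ b) := by
    intro a b hab
    have := hsm hab
    simp only [Function.comp_apply] at this
    rw [Prod.Lex.lt_iff] at this
    rcases this with h | ⟨_, h⟩
    · exact absurd h (lt_irrefl _)
    · exact h
  refine ⟨σ₀, ?_, ?_⟩
  · rw [mem_LExt]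
    intro i j hR
    have hlt := crownR_nat hl hR
    rcases lt_trichotomy (σ₀.symm i) (σ₀.symm j) with h | h | h
    · exact h
    · exfalso
      have : i = j := by
        have := congrArg σ₀ h
        rwa [Equiv.apply_symm_apply, Equiv.apply_symm_apply] at this
      rw [this] at hlt
      omega
    · exfalso
      have := hmono _ _ h
      rw [Equiv.apply_symm_apply, Equiv.apply_symm_apply] at this
      omega
  · rw [Finset.card_eq_zero, Finset.eq_empty_iff_forall_notMem]
    intro k hk
    have h1 := (mem_SSet.1 hk).1
    have h2 := (mem_SSet.1 hk).2
    have := hmono k (k + 1) (lt_succ k h1)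
    omega

noncomputable def dvec (ℓ : ℕ) [NeZero (2 * ℓ)] (j : ℕ) : ℕ :=
  ((LExt (2 * ℓ) (crownR ℓ)).filter (fun σ => (SSet (lblz ℓ) σ).card = j)).card

lemma dvec_pos (hl : 2 ≤ ℓ) : 1 ≤ dvec ℓ 0 := by
  rcases exists_desc_zero hl with ⟨σ, hσ, hd⟩
  rw [dvec, Nat.one_le_iff_ne_zero, ← Nat.pos_iff_ne_zero, Finset.card_pos]
  exact ⟨σ, Finset.mem_filter.2 ⟨hσ, hd⟩⟩

lemma sum_desc (hl : 2 ≤ ℓ) (F : ℕ → ℕ) :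
    ∑ σ ∈ LExt (2 * ℓ) (crownR ℓ), F ((SSet (lblz ℓ) σ).card)
      = ∑ j ∈ Finset.range (2 * ℓ - 1), dvec ℓ j * F j := by
  have hmaps : ∀ σ ∈ LExt (2 * ℓ) (crownR ℓ),
      (SSet (lblz ℓ) σ).card ∈ Finset.range (2 * ℓ - 1) := by
    intro σ hσ
    rw [Finset.mem_range]
    have := desc_le hl hσ
    omega
  rw [← Finset.sum_fiberwise_of_maps_to hmaps (fun σ => F ((SSet (lblz ℓ) σ).card))]
  apply Finset.sum_congr rfl
  intro j _
  have hin : ∀ σ ∈ (LExt (2 * ℓ) (crownR ℓ)).filter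
      (fun σ => (SSet (lblz ℓ) σ).card = j),
      F ((SSet (lblz ℓ) σ).card) = F j := by
    intro σ hσ
    rw [(Finset.mem_filter.1 hσ).2]
  rw [Finset.sum_congr rfl hin, Finset.sum_const, smul_eq_mul, dvec]

lemma F1' (hl : 2 ≤ ℓ) (n : ℕ) :
    (SFin ℓ n).card = ∑ j ∈ Finset.range (2 * ℓ - 1),
      dvec ℓ j * (n + 2 * ℓ - j).choose (2 * ℓ) := by
  rw [F1 hl n]
  exact sum_desc hl (fun m => (n + 2 * ℓ - m).choose (2 * ℓ))

lemma F2' (hl : 2 ≤ ℓ) (n : ℕ) :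
    (SFin ℓ n).card = ∑ j ∈ Finset.range (2 * ℓ - 1),
      dvec ℓ j * (n + 2 + j).choose (2 * ℓ) := by
  rw [F2 hl n]
  exact sum_desc hl (fun m => (n + 2 + m).choose (2 * ℓ))

lemma dvec_symm (hl : 2 ≤ ℓ) : ∀ m ≤ 2 * ℓ - 2, dvec ℓ m = dvec ℓ (2 * ℓ - 2 - m) := by
  have key : ∀ n : ℕ, ∑ j ∈ Finset.range (2 * ℓ - 1),
      dvec ℓ j * (n + 2 * ℓ - j).choose (2 * ℓ)
      = ∑ j ∈ Finset.range (2 * ℓ - 1),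
        dvec ℓ (2 * ℓ - 2 - j) * (n + 2 * ℓ - j).choose (2 * ℓ) := by
    intro n
    rw [← F1' hl n, F2' hl n]
    refine Finset.sum_nbij' (fun j => 2 * ℓ - 2 - j) (fun j => 2 * ℓ - 2 - j)
      ?_ ?_ ?_ ?_ ?_
    · intro j hj
      beta_reduce
      rw [Finset.mem_range] at *
      omega
    · intro j hj
      beta_reduce
      rw [Finset.mem_range] at *
      omega
    · intro j hj
      beta_reduce
      rw [Finset.mem_range] at hj
      omega
    · intro j hj
      beta_reduce
      rw [Finset.mem_range] at hj
      omega
    · intro j hj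
      beta_reduce
      rw [Finset.mem_range] at hj
      have h1 : 2 * ℓ - 2 - (2 * ℓ - 2 - j) = j := by omega
      have h2 : n + 2 + j = n + 2 * ℓ - (2 * ℓ - 2 - j) := by omega
      rw [h1, h2]
  intro m
  induction m using Nat.strong_induction_on with
  | _ m ih =>
    intro hm
    have hI := key m
    have hsub : Finset.range (m + 1) ⊆ Finset.range (2 * ℓ - 1) := by
      intro x hx
      rw [Finset.mem_range] at *
      omega
    have hvan : ∀ f : ℕ → ℕ, ∀ j ∈ Finset.range (2 * ℓ - 1), j ∉ Finset.range (m + 1) →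
        f j * (m + 2 * ℓ - j).choose (2 * ℓ) = 0 := by
      intro f j hj hj'
      rw [Finset.mem_range] at hj hj'
      have : (m + 2 * ℓ - j).choose (2 * ℓ) = 0 :=
        Nat.choose_eq_zero_of_lt (by omega)
      rw [this, mul_zero]
    rw [← Finset.sum_subset hsub (hvan _), ← Finset.sum_subset hsub (hvan _)] at hI
    rw [Finset.sum_range_succ, Finset.sum_range_succ] at hI
    have hcongr : ∑ j ∈ Finset.range m, dvec ℓ j * (m + 2 * ℓ - j).choose (2 * ℓ)
        = ∑ j ∈ Finset.range m, dvec ℓ (2 * ℓ - 2 - j) * (m + 2 * ℓ - j).choose (2 * ℓ) := by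
      apply Finset.sum_congr rfl
      intro j hj
      rw [Finset.mem_range] at hj
      rw [ih j hj (by omega)]
    rw [hcongr] at hI
    have hch : (m + 2 * ℓ - m).choose (2 * ℓ) = 1 := by
      rw [show m + 2 * ℓ - m = 2 * ℓ by omega]
      exact Nat.choose_self _
    rw [hch] at hI
    omega

lemma ehr_eq (hl : 2 ≤ ℓ) (n : ℕ) :
    ehr (graphPolytope (circularGraph (2 * ℓ))) n = (SFin ℓ n).card := by
  rw [ehr, ← Set.ncard_coe_finset]
  congr 1
  ext m
  rw [Finset.mem_coe, mem_SFin, Set.mem_setOf_eq]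
  rcases Nat.eq_zero_or_pos n with rfl | hn
  · have hP0 : (fun _ => (0 : ℝ)) ∈ graphPolytope (circularGraph (2 * ℓ)) := by
      constructor
      · intro i
        exact ⟨le_refl 0, zero_le_one⟩
      · intro i j _
        norm_num
    rw [Nat.cast_zero, Set.zero_smul_set ⟨_, hP0⟩]
    constructor
    · intro h
      have hm : ∀ i, m i = 0 := by
        intro i
        have h2 : (fun i => (m i : ℝ)) = 0 := h
        have h3 := congrFun h2 i
        simp only [Pi.zero_apply] at h3
        exact_mod_cast h3
      constructor
      · intro v
        rw [hm v]
        norm_num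
      · intro i j _
        rw [hm i, hm j]
        norm_num
    · rintro ⟨hbox, _⟩
      have hm : ∀ i, m i = 0 := by
        intro i
        have h1 := (hbox i).1
        have h2 := (hbox i).2
        omega
      show (fun i => (m i : ℝ)) = 0
      funext i
      simp only [Pi.zero_apply]
      rw [hm i]
      norm_num
  · have hnpos : (0 : ℝ) < (n : ℝ) := by positivity
    rw [Set.mem_smul_set]
    constructor
    · rintro ⟨y, ⟨hybox, hyedge⟩, hxy⟩
      have hxy' : ∀ i, (n : ℝ) * y i = (m i : ℝ) := by
        intro i
        have := congrFun hxy i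
        simpa using this
      constructor
      · intro v
        have h1 := (hybox v).1
        have h2 := (hybox v).2
        constructor
        · have h3 : (0 : ℝ) ≤ (m v : ℝ) := by
            rw [← hxy' v]
            exact mul_nonneg (le_of_lt hnpos) h1
          exact_mod_cast h3
        · have h3 : (m v : ℝ) ≤ (n : ℝ) := by
            rw [← hxy' v]
            nlinarith
          exact_mod_cast h3
      · intro i j hadj
        have h1 := hyedge i j hadj
        have h3 : (m i : ℝ) + (m j : ℝ) ≤ (n : ℝ) := by
          rw [← hxy' i, ← hxy' j]
          nlinarith
        exact_mod_cast h3
    · rintro ⟨hbox, hedge⟩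
      refine ⟨fun i => (m i : ℝ) / n, ⟨?_, ?_⟩, ?_⟩
      · intro i
        constructor
        · apply div_nonneg _ (le_of_lt hnpos)
          have := (hbox i).1
          exact_mod_cast this
        · rw [div_le_one hnpos]
          have := (hbox i).2
          exact_mod_cast this
      · intro i j hadj
        rw [← add_div, div_le_one hnpos]
        have := hedge i j hadj
        exact_mod_cast this
      · funext i
        simp only [Pi.smul_apply, smul_eq_mul]
        field_simp

end Final

end Stmt11

theorem stmt11 (ℓ : ℕ) (hℓ : 2 ≤ ℓ) :
    ∃ H : Polynomial ℚ,
      ((1 - PowerSeries.X) ^ (2 * ℓ + 1) : PowerSeries ℚ) *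
          ehrSeries (graphPolytope (circularGraph (2 * ℓ))) = (H : PowerSeries ℚ) ∧
        H.natDegree = 2 * ℓ - 2 ∧
        ∀ i ≤ 2 * ℓ - 2, H.coeff i = H.coeff (2 * ℓ - 2 - i) := by
  haveI : NeZero (2 * ℓ) := ⟨by omega⟩
  classical
  set Hpoly : Polynomial ℚ :=
    ∑ j ∈ Finset.range (2 * ℓ - 1), Polynomial.C ((Stmt11.dvec ℓ j : ℚ)) * Polynomial.X ^ j
    with hHpoly
  have hcoeff : ∀ i, Hpoly.coeff i =
      if i < 2 * ℓ - 1 then ((Stmt11.dvec ℓ i : ℚ)) else 0 := by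
    intro i
    rw [hHpoly, Polynomial.finset_sum_coeff]
    simp only [Polynomial.coeff_C_mul, Polynomial.coeff_X_pow, mul_ite, mul_one, mul_zero]
    rw [Finset.sum_ite_eq (Finset.range (2 * ℓ - 1)) i (fun j => (Stmt11.dvec ℓ j : ℚ))]
    simp [Finset.mem_range]
  have hsymm := Stmt11.dvec_symm hℓ
  have hd0 := Stmt11.dvec_pos hℓ
  have hdvec_top : Stmt11.dvec ℓ (2 * ℓ - 2) = Stmt11.dvec ℓ 0 := by
    simpa using (hsymm 0 (Nat.zero_le _)).symm
  refine ⟨Hpoly, ?_, ?_, ?_⟩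
  · -- series identity
    have hser : ehrSeries (graphPolytope (circularGraph (2 * ℓ)))
        = (Hpoly : PowerSeries ℚ) * (PowerSeries.invOneSubPow ℚ (2 * ℓ + 1)).val := by
      rw [PowerSeries.invOneSubPow_val_succ_eq_mk_add_choose]
      ext n
      set N := max n (2 * ℓ - 2) + 1 with hN
      have hE1 : (PowerSeries.coeff n) (ehrSeries (graphPolytope (circularGraph (2 * ℓ))))
          = ∑ j ∈ Finset.range N, (if j < 2 * ℓ - 1 then (Stmt11.dvec ℓ j : ℚ) else 0)
              * ((n + 2 * ℓ - j).choose (2 * ℓ) : ℚ) := by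
        simp only [ehrSeries, PowerSeries.coeff_mk]
        rw [Stmt11.ehr_eq hℓ n, Stmt11.F1' hℓ n]
        push_cast
        rw [Finset.sum_congr rfl (fun j hj => by
          rw [if_pos (Finset.mem_range.1 hj)] :
            ∀ j ∈ Finset.range (2 * ℓ - 1), (Stmt11.dvec ℓ j : ℚ)
              * ((n + 2 * ℓ - j).choose (2 * ℓ) : ℚ)
            = (if j < 2 * ℓ - 1 then (Stmt11.dvec ℓ j : ℚ) else 0)
              * ((n + 2 * ℓ - j).choose (2 * ℓ) : ℚ))]
        apply Finset.sum_subset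
        · intro x hx
          rw [Finset.mem_range] at *
          omega
        · intro j _ hj'
          rw [Finset.mem_range] at hj'
          rw [if_neg (by omega), zero_mul]
      have hE2 : (PowerSeries.coeff n) ((Hpoly : PowerSeries ℚ)
            * PowerSeries.mk (fun m => ((2 * ℓ + m).choose (2 * ℓ) : ℚ)))
          = ∑ j ∈ Finset.range N, (if j < 2 * ℓ - 1 then (Stmt11.dvec ℓ j : ℚ) else 0)
              * ((n + 2 * ℓ - j).choose (2 * ℓ) : ℚ) := by
        rw [PowerSeries.coeff_mul, Finset.Nat.sum_antidiagonal_eq_sum_range_succ_mk]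
        rw [Finset.sum_congr rfl (fun j hj => by
          rw [Polynomial.coeff_coe, hcoeff j, PowerSeries.coeff_mk]
          rw [show 2 * ℓ + ((j, n - j).2) = n + 2 * ℓ - j by
            have := Finset.mem_range.1 hj
            show 2 * ℓ + (n - j) = n + 2 * ℓ - j
            omega] :
          ∀ j ∈ Finset.range (n + 1),
            (PowerSeries.coeff (j, n - j).1) (Hpoly : PowerSeries ℚ)
              * (PowerSeries.coeff (j, n - j).2)
                (PowerSeries.mk (fun m => ((2 * ℓ + m).choose (2 * ℓ) : ℚ)))
            = (if j < 2 * ℓ - 1 then (Stmt11.dvec ℓ j : ℚ) else 0)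
              * ((n + 2 * ℓ - j).choose (2 * ℓ) : ℚ))]
        apply Finset.sum_subset
        · intro x hx
          rw [Finset.mem_range] at *
          omega
        · intro j hj hj'
          rw [Finset.mem_range] at hj hj'
          rw [show ((n + 2 * ℓ - j).choose (2 * ℓ) : ℚ) = 0 by
            rw [Nat.choose_eq_zero_of_lt (by omega)]
            norm_num, mul_zero]
      rw [hE1, hE2]
    rw [hser]
    have hunit : ((1 - PowerSeries.X) ^ (2 * ℓ + 1) : PowerSeries ℚ)
        * (PowerSeries.invOneSubPow ℚ (2 * ℓ + 1)).val = 1 := by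
      rw [← PowerSeries.invOneSubPow_inv_eq_one_sub_pow]
      exact (PowerSeries.invOneSubPow ℚ (2 * ℓ + 1)).inv_val
    calc ((1 - PowerSeries.X) ^ (2 * ℓ + 1) : PowerSeries ℚ)
        * ((Hpoly : PowerSeries ℚ) * (PowerSeries.invOneSubPow ℚ (2 * ℓ + 1)).val)
        = (Hpoly : PowerSeries ℚ) * (((1 - PowerSeries.X) ^ (2 * ℓ + 1) : PowerSeries ℚ)
            * (PowerSeries.invOneSubPow ℚ (2 * ℓ + 1)).val) := by ring
      _ = (Hpoly : PowerSeries ℚ) := by rw [hunit, mul_one]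
  · -- natDegree
    have hub : Hpoly.natDegree ≤ 2 * ℓ - 2 := by
      apply Polynomial.natDegree_le_iff_coeff_eq_zero.2
      intro m hm
      rw [hcoeff m, if_neg (by omega)]
    have hlb : Hpoly.coeff (2 * ℓ - 2) ≠ 0 := by
      rw [hcoeff, if_pos (by omega), hdvec_top]
      exact_mod_cast Nat.pos_iff_ne_zero.1 (by omega)
    exact le_antisymm hub (Polynomial.le_natDegree_of_ne_zero hlb)
  · -- palindromy
    intro i hi
    rw [hcoeff i, hcoeff (2 * ℓ - 2 - i), if_pos (by omega), if_pos (by omega)]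
    exact_mod_cast hsymm i hi
end
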